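/- Let Q be a set of connected X-labeled graphs and let G_α, G_{β1}, G_{β2} be t-boundaried X-labeled graphs such that folio*_{Q,t}(G_{β1}) ⊆ folio*_{Q,t}(G_{β2}). Then folio*_{Q,t}(G_α ⊕ G_{β1}) ⊆ folio*_{Q,t}(G_α ⊕ G_{β2}). Moreover, if folio*_{Q,t}(G_{β1}) = folio*_{Q,t}(G_{β2}), then folio*_{Q,t}(G_α ⊕ G_{β1}) = folio*_{Q,t}(G_α ⊕ G_{β2}). -/

import Mathlib

namespace FDel

open scoped Classical

noncomputable section

/-- A boundaried `X`-labeled graph on the vertex universe `ℕ`: a (finite) vertex set,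
a symmetric loopless adjacency relation, a labelset for each vertex, and a partial
assignment of boundary indices to vertices. -/
structure BLG (X : Type) where
  verts : Set ℕ
  Adj : ℕ → ℕ → Prop
  label : ℕ → Set X
  bnd : ℕ → Option ℕ

variable {X : Type}

/-- Well-formedness of `G` as a `t`-boundaried `X`-labeled graph: the vertex set is finite,
adjacency is symmetric, loopless and supported on the vertex set, labels and boundary
indices live on vertices, the boundary assignment is injective, and indices lie in `{1,…,t}`. -/
def BLG.WF (t : ℕ) (G : BLG X) : Prop :=
  G.verts.Finite ∧
  (∀ u v, G.Adj u v → G.Adj v u) ∧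
  (∀ v, ¬ G.Adj v v) ∧
  (∀ u v, G.Adj u v → u ∈ G.verts ∧ v ∈ G.verts) ∧
  (∀ v, v ∉ G.verts → G.label v = ∅ ∧ G.bnd v = none) ∧
  (∀ u v i, G.bnd u = some i → G.bnd v = some i → u = v) ∧
  (∀ v i, G.bnd v = some i → v ∈ G.verts ∧ 1 ≤ i ∧ i ≤ t)

/-- Reachability inside the vertex set `S`. -/
def ReachIn (G : BLG X) (S : Set ℕ) (a b : ℕ) : Prop :=
  Relation.ReflTransGen (fun u v => G.Adj u v ∧ u ∈ S ∧ v ∈ S) a b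

/-- `C` is (the vertex set of) a connected component of the subgraph of `G` induced by `S`. -/
def IsCompOf (G : BLG X) (S C : Set ℕ) : Prop :=
  ∃ v ∈ S, C = {w | w ∈ S ∧ ReachIn G S v w}

/-- `G` is connected (and nonempty). -/
def BLG.Conn (G : BLG X) : Prop :=
  G.verts.Nonempty ∧ ∀ a ∈ G.verts, ∀ b ∈ G.verts, ReachIn G G.verts a b

/-- Isomorphism of boundaried labeled graphs: a bijection of the vertex sets preserving
adjacency, labelsets and boundary indices. -/
def Iso (G G' : BLG X) : Prop :=
  ∃ f : ℕ → ℕ, Set.BijOn f G.verts G'.verts ∧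
    (∀ u ∈ G.verts, ∀ v ∈ G.verts, (G.Adj u v ↔ G'.Adj (f u) (f v))) ∧
    (∀ v ∈ G.verts, G'.label (f v) = G.label v) ∧
    (∀ v ∈ G.verts, G'.bnd (f v) = G.bnd v)

/-- A boundaried labeled minor model of `H` in `G`. -/
structure MinorModel (H G : BLG X) (φ : ℕ → Set ℕ) : Prop where
  sub : ∀ v ∈ H.verts, φ v ⊆ G.verts
  nonempty : ∀ v ∈ H.verts, (φ v).Nonempty
  conn : ∀ v ∈ H.verts, ∀ a ∈ φ v, ∀ b ∈ φ v, ReachIn G (φ v) a b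
  disj : ∀ u ∈ H.verts, ∀ v ∈ H.verts, u ≠ v → Disjoint (φ u) (φ v)
  edge : ∀ u ∈ H.verts, ∀ v ∈ H.verts, H.Adj u v → ∃ a ∈ φ u, ∃ b ∈ φ v, G.Adj a b
  bnd_none : ∀ v ∈ H.verts, H.bnd v = none → ∀ a ∈ φ v, G.bnd a = none
  bnd_some : ∀ v ∈ H.verts, ∀ i, H.bnd v = some i →
    (∀ a ∈ φ v, G.bnd a = none ∨ G.bnd a = some i) ∧ ∃ a ∈ φ v, G.bnd a = some i
  labels : ∀ v ∈ H.verts, ∀ x, x ∈ H.label v → ∃ a ∈ φ v, x ∈ G.label a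

/-- `H` is a boundaried labeled minor of `G`. -/
def Minor (H G : BLG X) : Prop := ∃ φ, MinorModel H G φ

/-- Auxiliary injection for the right summand of `⊕`: a vertex of `G2` that is a boundary
vertex whose index also occurs in `G1` is identified with the corresponding vertex of `G1`. -/
def rmap (G1 G2 : BLG X) (v : ℕ) : ℕ :=
  if h : ∃ u, u ∈ G1.verts ∧ ∃ i, G2.bnd v = some i ∧ G1.bnd u = some i
  then 2 * Classical.choose h
  else 2 * v + 1

/-- The sum `G1 ⊕ G2`: disjoint union with boundary vertices of equal index identified. -/
def glue (G1 G2 : BLG X) : BLG X where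
  verts := (fun v => 2 * v) '' G1.verts ∪ rmap G1 G2 '' G2.verts
  Adj a b :=
    (∃ u ∈ G1.verts, ∃ v ∈ G1.verts, G1.Adj u v ∧ a = 2 * u ∧ b = 2 * v) ∨
    (∃ u ∈ G2.verts, ∃ v ∈ G2.verts, G2.Adj u v ∧ a = rmap G1 G2 u ∧ b = rmap G1 G2 v)
  label x := {l | (∃ v ∈ G1.verts, x = 2 * v ∧ l ∈ G1.label v) ∨
                  (∃ v ∈ G2.verts, x = rmap G1 G2 v ∧ l ∈ G2.label v)}
  bnd x :=
    if x ∈ (fun v => 2 * v) '' G1.verts ∪ rmap G1 G2 '' G2.verts then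
      (if x % 2 = 0 then G1.bnd (x / 2) else G2.bnd (x / 2))
    else none

/-- One-vertex piece on vertex `v`, with boundary index `i` and labelset `L`. -/
def singlePc (v i : ℕ) (L : Set X) : BLG X :=
  ⟨{v}, fun _ _ => False, fun x => if x = v then L else ∅,
   fun x => if x = v then some i else none⟩

/-- Two-vertex piece consisting of the single edge `{u,v}` with boundary indices `i`, `j`. -/
def edgePc (u v i j : ℕ) : BLG X :=
  ⟨{u, v}, fun a b => (a = u ∧ b = v) ∨ (a = v ∧ b = u), fun _ => ∅,
   fun x => if x = u then some i else if x = v then some j else none⟩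

/-- The non-boundary vertices of `G`. -/
def interior (G : BLG X) : Set ℕ := {v | v ∈ G.verts ∧ G.bnd v = none}

/-- The piece of `G` corresponding to a connected component `C` of `G − δ(G)`: `C` together
with its neighboring boundary vertices, with edges between boundary vertices removed and all
labels removed from boundary vertices. -/
def compPc (G : BLG X) (C : Set ℕ) : BLG X :=
  ⟨C ∪ {v | v ∈ G.verts ∧ G.bnd v ≠ none ∧ ∃ c ∈ C, G.Adj v c},
   fun a b => G.Adj a b ∧
     (a ∈ C ∪ {v | v ∈ G.verts ∧ G.bnd v ≠ none ∧ ∃ c ∈ C, G.Adj v c}) ∧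
     (b ∈ C ∪ {v | v ∈ G.verts ∧ G.bnd v ≠ none ∧ ∃ c ∈ C, G.Adj v c}) ∧
     ¬(G.bnd a ≠ none ∧ G.bnd b ≠ none),
   fun x => if x ∈ C then G.label x else ∅,
   fun x => if x ∈ C ∪ {v | v ∈ G.verts ∧ G.bnd v ≠ none ∧ ∃ c ∈ C, G.Adj v c}
            then G.bnd x else none⟩

/-- The set of pieces of `G`. -/
def pcs (G : BLG X) : Set (BLG X) :=
  {p | ∃ v ∈ G.verts, ∃ i, G.bnd v = some i ∧ p = singlePc v i (∅ : Set X)} ∪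
  {p | ∃ v ∈ G.verts, ∃ i, G.bnd v = some i ∧ ∃ l ∈ G.label v, p = singlePc v i {l}} ∪
  {p | ∃ u v i j, G.Adj u v ∧ G.bnd u = some i ∧ G.bnd v = some j ∧ p = edgePc u v i j} ∪
  {p | ∃ C, IsCompOf G (interior G) C ∧ p = compPc G C}

/-- The sum `⊕_{p ∈ P} p` of a set of pieces of a common graph; since pieces of a common
graph overlap exactly in boundary vertices (with equal indices), the sum is the union. -/
def unionOf (P : Set (BLG X)) : BLG X :=
  ⟨⋃ p ∈ P, p.verts,
   fun a b => ∃ p ∈ P, p.Adj a b,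
   fun x => ⋃ p ∈ P, p.label x,
   fun x => if h : ∃ p, p ∈ P ∧ p.bnd x ≠ none then (Classical.choose h).bnd x else none⟩

/-- `mpcs(G)`: all sums of nonempty subsets of the pieces of `G`, up to isomorphism. -/
def mpcs (G : BLG X) : Set (BLG X) :=
  {H | ∃ P ⊆ pcs G, P.Nonempty ∧ Iso H (unionOf P)}

/-- `mpcs` of a set of graphs. -/
def mpcsSet (S : Set (BLG X)) : Set (BLG X) := ⋃ G ∈ S, mpcs G

/-- Assign boundary index `i` to the vertex `v` of `G`. -/
def assignBnd (G : BLG X) (v i : ℕ) : BLG X :=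
  ⟨G.verts, G.Adj, G.label, Function.update G.bnd v (some i)⟩

/-- Split the boundary vertex `u` of `G`: add a new vertex `w` with boundary index `i` and
the edge `{u,w}`, reattach the edges `{u,b}` with `ME b` to `w`, and move the labels `l` of
`u` with `ML l` to `w`. -/
def splitVx (G : BLG X) (u w i : ℕ) (ME : ℕ → Prop) (ML : X → Prop) : BLG X :=
  ⟨insert w G.verts,
   fun a b =>
     (a = w ∧ b = u) ∨ (a = u ∧ b = w) ∨
     (a = w ∧ b ≠ w ∧ G.Adj u b ∧ ME b) ∨ (b = w ∧ a ≠ w ∧ G.Adj u a ∧ ME a) ∨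
     (a ≠ w ∧ b ≠ w ∧ G.Adj a b ∧ ¬(a = u ∧ ME b) ∧ ¬(b = u ∧ ME a)),
   fun x => if x = w then {l | l ∈ G.label u ∧ ML l}
            else if x = u then {l | l ∈ G.label u ∧ ¬ ML l}
            else G.label x,
   fun x => if x = w then some i else G.bnd x⟩

/-- One extension step turning a `t`-boundaried graph into a `(t+1)`-boundaried one (up to
isomorphism): keep the graph unchanged, assign index `t+1` to a non-boundary vertex, or
split a boundary vertex. -/
def ExtOne (t : ℕ) (H H' : BLG X) : Prop :=
  Iso H' H ∨
  (∃ v ∈ H.verts, H.bnd v = none ∧ Iso H' (assignBnd H v (t + 1))) ∨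
  (∃ u ∈ H.verts, ∃ i, H.bnd u = some i ∧ ∃ w, w ∉ H.verts ∧
    ∃ ME : ℕ → Prop, ∃ ML : X → Prop, Iso H' (splitVx H u w (t + 1) ME ML))

/-- `H' ∈ ext_{+k}(H)` for a `t`-boundaried graph `H`: `k` successive extension steps. -/
def ExtN (t : ℕ) : ℕ → BLG X → BLG X → Prop
  | 0, H, H' => Iso H' H
  | k + 1, H, H' => ∃ H'', ExtN t k H H'' ∧ ExtOne (t + k) H'' H'

/-- `ext_{+k}` of a set of `t`-boundaried graphs. -/
def extSet (t k : ℕ) (S : Set (BLG X)) : Set (BLG X) := {H' | ∃ H ∈ S, ExtN t k H H'}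

/-- `mpcs_{+t}(S)` for a set `S` of unboundaried graphs. -/
def mpcsPlus (t : ℕ) (S : Set (BLG X)) : Set (BLG X) := mpcsSet (extSet 0 t S)

/-- `forget(G,k)`: forget the boundary status of all boundary vertices with index `> k`. -/
def forget (G : BLG X) (k : ℕ) : BLG X :=
  ⟨G.verts, G.Adj, G.label, fun v => (G.bnd v).bind fun i => if i ≤ k then some i else none⟩

/-- Membership in a set of graphs, up to isomorphism. -/
def MemIso (H : BLG X) (S : Set (BLG X)) : Prop := ∃ H' ∈ S, Iso H H'

/-- `G1` and `G2` share no edge: no edge between boundary indices `i,j` occurs in both. -/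
def EdgeDisjoint (G1 G2 : BLG X) : Prop :=
  ¬ ∃ i j, (∃ u v, G1.Adj u v ∧ G1.bnd u = some i ∧ G1.bnd v = some j) ∧
           (∃ u v, G2.Adj u v ∧ G2.bnd u = some i ∧ G2.bnd v = some j)

/-- The merge `Π1 ⊙_F Π2`. -/
def Merge (F : Set (BLG X)) (t : ℕ) (P1 P2 : Set (BLG X)) : Set (BLG X) :=
  {G | G ∈ mpcsPlus t F ∧ ∀ G1 G2 : BLG X, G1.WF t → G2.WF t → EdgeDisjoint G1 G2 →
    Iso (glue G1 G2) G →
    (∃ H ∈ P1, Minor H G1) ∨ (∃ H ∈ P2, Minor H G2)}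

/-- `(P1, P2) ∈ split_F(P)`: both contain `P`; for every `G ∈ P` and every subset `Y` of its
pieces, the sum over `Y` was added to `P1` or the sum over the complement was added to `P2`;
and every member of `P1`/`P2` is accounted for by one of the two addition rules. -/
def SplitMem (F : Set (BLG X)) (t : ℕ) (P P1 P2 : Set (BLG X)) : Prop :=
  P ⊆ P1 ∧ P ⊆ P2 ∧
  (∀ G ∈ P, ∀ Y ⊆ pcs G, MemIso (unionOf Y) P1 ∨ MemIso (unionOf (pcs G \ Y)) P2) ∧
  (∀ H ∈ P1, H ∈ P ∨ (∃ G ∈ P, ∃ Y ⊆ pcs G, Iso H (unionOf Y)) ∨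
    (H ∈ mpcsPlus t F ∧ ∃ H', Minor H' H ∧ MemIso H' P1)) ∧
  (∀ H ∈ P2, H ∈ P ∨ (∃ G ∈ P, ∃ Y ⊆ pcs G, Iso H (unionOf Y)) ∨
    (H ∈ mpcsPlus t F ∧ ∃ H', Minor H' H ∧ MemIso H' P2))

/-- `folio*_{Q,t}(G)`: the boundaried labeled minors of `G` lying in `mpcs_{+t}(Q)`. -/
def folioStar (Q : Set (BLG X)) (t : ℕ) (G : BLG X) : Set (BLG X) :=
  {H | H ∈ mpcsPlus t Q ∧ Minor H G}

/-- The `(t+1)`-boundaried graphs in which boundary index `t+1` is assigned to a vertex. -/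
def defBnd (t : ℕ) : Set (BLG X) := {G | ∃ v ∈ G.verts, G.bnd v = some t}

/-! ### Auxiliary lemmas -/

section Aux

lemma reach_map {G G' : BLG X} {S S' : Set ℕ} (f : ℕ → ℕ)
    (h : ∀ u v, G.Adj u v → u ∈ S → v ∈ S → G'.Adj (f u) (f v) ∧ f u ∈ S' ∧ f v ∈ S')
    {a b : ℕ} (hr : ReachIn G S a b) : ReachIn G' S' (f a) (f b) := by
  induction hr with
  | refl => exact Relation.ReflTransGen.refl
  | tail h1 h2 ih => exact ih.tail (h _ _ h2.1 h2.2.1 h2.2.2)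

lemma reach_mono {G G' : BLG X} {S S' : Set ℕ}
    (h : ∀ u v, G.Adj u v → u ∈ S → v ∈ S → G'.Adj u v ∧ u ∈ S' ∧ v ∈ S')
    {a b : ℕ} (hr : ReachIn G S a b) : ReachIn G' S' a b :=
  reach_map (fun x => x) h hr

/-- `v` is a boundary vertex of `G2` matched by a boundary vertex of `G1`. -/
def Matched (G1 G2 : BLG X) (v : ℕ) : Prop :=
  ∃ u, u ∈ G1.verts ∧ ∃ i, G2.bnd v = some i ∧ G1.bnd u = some i

lemma rmap_of_matched {G1 G2 : BLG X} {v : ℕ} (h : Matched G1 G2 v) :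
    ∃ u, u ∈ G1.verts ∧ (∃ i, G2.bnd v = some i ∧ G1.bnd u = some i) ∧
      rmap G1 G2 v = 2 * u := by
  have h' : ∃ u ∈ G1.verts, ∃ i, G2.bnd v = some i ∧ G1.bnd u = some i := h
  rw [rmap, dif_pos h']
  exact ⟨Classical.choose h', (Classical.choose_spec h').1, (Classical.choose_spec h').2, rfl⟩

lemma rmap_of_not_matched {G1 G2 : BLG X} {v : ℕ} (h : ¬ Matched G1 G2 v) :
    rmap G1 G2 v = 2 * v + 1 := by
  have h' : ¬ ∃ u ∈ G1.verts, ∃ i, G2.bnd v = some i ∧ G1.bnd u = some i := h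
  rw [rmap, dif_neg h']

lemma rmap_even_iff {G1 G2 : BLG X} {v : ℕ} :
    rmap G1 G2 v % 2 = 0 ↔ Matched G1 G2 v := by
  by_cases h : Matched G1 G2 v
  · obtain ⟨u, -, -, he⟩ := rmap_of_matched h
    constructor
    · intro _; exact h
    · intro _; omega
  · rw [rmap_of_not_matched h]
    constructor
    · intro h'; omega
    · intro h'; exact absurd h' h

lemma rmap_inj {t : ℕ} {G1 G2 : BLG X} (h1 : G1.WF t) (h2 : G2.WF t) {u v : ℕ}
    (hu : u ∈ G2.verts) (hv : v ∈ G2.verts) (h : rmap G1 G2 u = rmap G1 G2 v) : u = v := by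
  by_cases hmu : Matched G1 G2 u <;> by_cases hmv : Matched G1 G2 v
  · obtain ⟨a, ha, ⟨i, hui, hai⟩, hea⟩ := rmap_of_matched hmu
    obtain ⟨b, hb, ⟨j, hvj, hbj⟩, heb⟩ := rmap_of_matched hmv
    rw [hea, heb] at h
    have hab : a = b := by omega
    subst hab
    have hij : i = j := by rw [hai] at hbj; injection hbj
    subst hij
    exact h2.2.2.2.2.2.1 u v i hui hvj
  · obtain ⟨a, ha, -, hea⟩ := rmap_of_matched hmu
    rw [hea, rmap_of_not_matched hmv] at h; omega
  · obtain ⟨a, ha, -, hea⟩ := rmap_of_matched hmv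
    rw [hea, rmap_of_not_matched hmu] at h; omega
  · rw [rmap_of_not_matched hmu, rmap_of_not_matched hmv] at h; omega

lemma glue_verts {G1 G2 : BLG X} {a : ℕ} :
    a ∈ (glue G1 G2).verts ↔
      (∃ u ∈ G1.verts, a = 2 * u) ∨ (∃ v ∈ G2.verts, a = rmap G1 G2 v) := by
  simp only [glue, Set.mem_union, Set.mem_image]
  constructor
  · rintro (⟨u, hu, rfl⟩ | ⟨v, hv, rfl⟩)
    · exact Or.inl ⟨u, hu, rfl⟩
    · exact Or.inr ⟨v, hv, rfl⟩
  · rintro (⟨u, hu, rfl⟩ | ⟨v, hv, rfl⟩)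
    · exact Or.inl ⟨u, hu, rfl⟩
    · exact Or.inr ⟨v, hv, rfl⟩

lemma mem_glue_left {G1 G2 : BLG X} {u : ℕ} (h : u ∈ G1.verts) :
    2 * u ∈ (glue G1 G2).verts := glue_verts.2 (Or.inl ⟨u, h, rfl⟩)

lemma mem_glue_right {G1 G2 : BLG X} {v : ℕ} (h : v ∈ G2.verts) :
    rmap G1 G2 v ∈ (glue G1 G2).verts := glue_verts.2 (Or.inr ⟨v, h, rfl⟩)

lemma glue_even {G1 G2 : BLG X} {a : ℕ} (ha : a ∈ (glue G1 G2).verts) (he : a % 2 = 0) :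
    a / 2 ∈ G1.verts ∧ a = 2 * (a / 2) := by
  rcases glue_verts.1 ha with ⟨u, hu, rfl⟩ | ⟨v, hv, rfl⟩
  · have : 2 * u / 2 = u := by omega
    rw [this]; exact ⟨hu, by omega⟩
  · have hm : Matched G1 G2 v := rmap_even_iff.1 he
    obtain ⟨u, hu, -, heq⟩ := rmap_of_matched hm
    rw [heq]
    have : 2 * u / 2 = u := by omega
    rw [this]; exact ⟨hu, by omega⟩

lemma glue_odd {G1 G2 : BLG X} {a : ℕ} (ha : a ∈ (glue G1 G2).verts) (ho : a % 2 = 1) :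
    a / 2 ∈ G2.verts ∧ a = 2 * (a / 2) + 1 ∧ rmap G1 G2 (a / 2) = a := by
  rcases glue_verts.1 ha with ⟨u, hu, rfl⟩ | ⟨v, hv, rfl⟩
  · omega
  · by_cases hm : Matched G1 G2 v
    · obtain ⟨u, hu, -, heq⟩ := rmap_of_matched hm
      rw [heq] at ho ⊢; omega
    · have heq := rmap_of_not_matched (G1 := G1) hm
      rw [heq] at ho ⊢
      have : (2 * v + 1) / 2 = v := by omega
      rw [this]
      exact ⟨hv, by omega, heq.symm ▸ rfl⟩

lemma glue_bnd_even {G1 G2 : BLG X} {a : ℕ} (ha : a ∈ (glue G1 G2).verts) (he : a % 2 = 0) :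
    (glue G1 G2).bnd a = G1.bnd (a / 2) := by
  show (if a ∈ (fun v => 2 * v) '' G1.verts ∪ rmap G1 G2 '' G2.verts then
      (if a % 2 = 0 then G1.bnd (a / 2) else G2.bnd (a / 2)) else none) = _
  have ha' : a ∈ (fun v => 2 * v) '' G1.verts ∪ rmap G1 G2 '' G2.verts := ha
  rw [if_pos ha', if_pos he]

lemma glue_bnd_odd {G1 G2 : BLG X} {a : ℕ} (ha : a ∈ (glue G1 G2).verts) (ho : a % 2 = 1) :
    (glue G1 G2).bnd a = G2.bnd (a / 2) := by
  show (if a ∈ (fun v => 2 * v) '' G1.verts ∪ rmap G1 G2 '' G2.verts then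
      (if a % 2 = 0 then G1.bnd (a / 2) else G2.bnd (a / 2)) else none) = _
  have ha' : a ∈ (fun v => 2 * v) '' G1.verts ∪ rmap G1 G2 '' G2.verts := ha
  rw [if_pos ha', if_neg (by omega)]

lemma glue_bnd_notmem {G1 G2 : BLG X} {a : ℕ} (ha : a ∉ (glue G1 G2).verts) :
    (glue G1 G2).bnd a = none := by
  show (if a ∈ (fun v => 2 * v) '' G1.verts ∪ rmap G1 G2 '' G2.verts then
      (if a % 2 = 0 then G1.bnd (a / 2) else G2.bnd (a / 2)) else none) = none
  have ha' : a ∉ (fun v => 2 * v) '' G1.verts ∪ rmap G1 G2 '' G2.verts := ha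
  rw [if_neg ha']

lemma glue_bnd_2mul {G1 G2 : BLG X} {u : ℕ} (hu : u ∈ G1.verts) :
    (glue G1 G2).bnd (2 * u) = G1.bnd u := by
  have h := glue_bnd_even (G2 := G2) (mem_glue_left hu) (by omega)
  have : 2 * u / 2 = u := by omega
  rwa [this] at h

lemma glue_bnd_rmap {G1 G2 : BLG X} {v : ℕ} (hv : v ∈ G2.verts) :
    (glue G1 G2).bnd (rmap G1 G2 v) = G2.bnd v := by
  by_cases hm : Matched G1 G2 v
  · obtain ⟨u, hu, ⟨i, hvi, hui⟩, heq⟩ := rmap_of_matched hm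
    rw [heq, glue_bnd_2mul hu, hui, hvi]
  · have heq := rmap_of_not_matched (G1 := G1) hm
    rw [heq]
    have h := glue_bnd_odd (G1 := G1) (G2 := G2) (a := 2 * v + 1)
      (heq ▸ mem_glue_right hv) (by omega)
    have h2 : (2 * v + 1) / 2 = v := by omega
    rwa [h2] at h

lemma glue_bnd_inj {t : ℕ} {G1 G2 : BLG X} (h1 : G1.WF t) (h2 : G2.WF t) {a b : ℕ} {i : ℕ}
    (hai : (glue G1 G2).bnd a = some i) (hbi : (glue G1 G2).bnd b = some i) : a = b := by
  by_cases hav : a ∈ (glue G1 G2).verts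
  · by_cases hbv : b ∈ (glue G1 G2).verts
    · rcases Nat.mod_two_eq_zero_or_one a with hae | hao <;>
        rcases Nat.mod_two_eq_zero_or_one b with hbe | hbo
      · rw [glue_bnd_even hav hae] at hai
        rw [glue_bnd_even hbv hbe] at hbi
        have := h1.2.2.2.2.2.1 _ _ _ hai hbi
        have ha2 := (glue_even hav hae).2
        have hb2 := (glue_even hbv hbe).2
        omega
      · exfalso
        rw [glue_bnd_even hav hae] at hai
        rw [glue_bnd_odd hbv hbo] at hbi
        obtain ⟨hbv2, -, hbr⟩ := glue_odd hbv hbo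
        have hm : Matched G1 G2 (b / 2) := ⟨a / 2, (glue_even hav hae).1, i, hbi, hai⟩
        have := rmap_even_iff.2 hm
        rw [hbr] at this; omega
      · exfalso
        rw [glue_bnd_even hbv hbe] at hbi
        rw [glue_bnd_odd hav hao] at hai
        obtain ⟨hav2, -, har⟩ := glue_odd hav hao
        have hm : Matched G1 G2 (a / 2) := ⟨b / 2, (glue_even hbv hbe).1, i, hai, hbi⟩
        have := rmap_even_iff.2 hm
        rw [har] at this; omega
      · rw [glue_bnd_odd hav hao] at hai
        rw [glue_bnd_odd hbv hbo] at hbi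
        have := h2.2.2.2.2.2.1 _ _ _ hai hbi
        have ha2 := (glue_odd hav hao).2.1
        have hb2 := (glue_odd hbv hbo).2.1
        omega
    · rw [glue_bnd_notmem hbv] at hbi; exact absurd hbi (by simp)
  · rw [glue_bnd_notmem hav] at hai; exact absurd hai (by simp)

lemma glue_adj_iff {G1 G2 : BLG X} {a b : ℕ} :
    (glue G1 G2).Adj a b ↔
      (∃ u ∈ G1.verts, ∃ v ∈ G1.verts, G1.Adj u v ∧ a = 2 * u ∧ b = 2 * v) ∨
      (∃ u ∈ G2.verts, ∃ v ∈ G2.verts, G2.Adj u v ∧ a = rmap G1 G2 u ∧ b = rmap G1 G2 v) :=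
  Iff.rfl

lemma glue_label_iff {G1 G2 : BLG X} {a : ℕ} {l : X} :
    l ∈ (glue G1 G2).label a ↔
      (∃ w ∈ G1.verts, a = 2 * w ∧ l ∈ G1.label w) ∨
      (∃ w ∈ G2.verts, a = rmap G1 G2 w ∧ l ∈ G2.label w) :=
  Iff.rfl

lemma glue_adj_G1 {G1 G2 : BLG X} {u v : ℕ} (hu : u ∈ G1.verts) (hv : v ∈ G1.verts)
    (h : G1.Adj u v) : (glue G1 G2).Adj (2 * u) (2 * v) :=
  glue_adj_iff.2 (Or.inl ⟨u, hu, v, hv, h, rfl, rfl⟩)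

lemma glue_adj_G2 {G1 G2 : BLG X} {u v : ℕ} (hu : u ∈ G2.verts) (hv : v ∈ G2.verts)
    (h : G2.Adj u v) : (glue G1 G2).Adj (rmap G1 G2 u) (rmap G1 G2 v) :=
  glue_adj_iff.2 (Or.inr ⟨u, hu, v, hv, h, rfl, rfl⟩)

lemma glue_adj_mem {G1 G2 : BLG X} {a b : ℕ} (h : (glue G1 G2).Adj a b) :
    a ∈ (glue G1 G2).verts ∧ b ∈ (glue G1 G2).verts := by
  rcases glue_adj_iff.1 h with ⟨u, hu, v, hv, -, rfl, rfl⟩ | ⟨u, hu, v, hv, -, rfl, rfl⟩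
  · exact ⟨mem_glue_left hu, mem_glue_left hv⟩
  · exact ⟨mem_glue_right hu, mem_glue_right hv⟩

end Aux

section Reach

lemma glue_adj_mixed {G1 G2 : BLG X} {a b : ℕ} (h : (glue G1 G2).Adj a b)
    (ha : a % 2 = 0) (hb : b % 2 = 1) : (glue G1 G2).bnd a ≠ none := by
  rcases glue_adj_iff.1 h with ⟨u, hu, v, hv, -, rfl, rfl⟩ | ⟨u, hu, v, hv, -, rfl, rfl⟩
  · omega
  · have hm : Matched G1 G2 u := rmap_even_iff.1 ha
    obtain ⟨-, -, ⟨i, hui, -⟩, -⟩ := rmap_of_matched hm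
    rw [glue_bnd_rmap hu, hui]; simp

lemma glue_adj_mixed' {G1 G2 : BLG X} {a b : ℕ} (h : (glue G1 G2).Adj a b)
    (ha : a % 2 = 1) (hb : b % 2 = 0) : (glue G1 G2).bnd b ≠ none := by
  rcases glue_adj_iff.1 h with ⟨u, hu, v, hv, -, rfl, rfl⟩ | ⟨u, hu, v, hv, -, rfl, rfl⟩
  · omega
  · have hm : Matched G1 G2 v := rmap_even_iff.1 hb
    obtain ⟨-, -, ⟨i, hvi, -⟩, -⟩ := rmap_of_matched hm
    rw [glue_bnd_rmap hv, hvi]; simp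

lemma glue_adj_parity {G1 G2 : BLG X} {a b : ℕ} (h : (glue G1 G2).Adj a b)
    (hna : (glue G1 G2).bnd a = none) (hnb : (glue G1 G2).bnd b = none) : a % 2 = b % 2 := by
  rcases Nat.mod_two_eq_zero_or_one a with hae | hao <;>
    rcases Nat.mod_two_eq_zero_or_one b with hbe | hbo
  · omega
  · exact absurd hna (glue_adj_mixed h hae hbo)
  · exact absurd hnb (glue_adj_mixed' h hao hbe)
  · omega

lemma glue_adj_even_transfer {t : ℕ} {G1 G2 G2' : BLG X} (h1 : G1.WF t) (h2 : G2.WF t)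
    {a b : ℕ} (h : (glue G1 G2).Adj a b) (ha : a % 2 = 0) (hb : b % 2 = 0)
    (hsafe : (glue G1 G2).bnd a = none ∨ (glue G1 G2).bnd b = none ∨ a = b) :
    (glue G1 G2').Adj a b := by
  rcases glue_adj_iff.1 h with ⟨u, hu, v, hv, hadj, rfl, rfl⟩ | ⟨u, hu, v, hv, hadj, rfl, rfl⟩
  · exact glue_adj_G1 hu hv hadj
  · exfalso
    have hmu : Matched G1 G2 u := rmap_even_iff.1 ha
    have hmv : Matched G1 G2 v := rmap_even_iff.1 hb
    obtain ⟨-, -, ⟨i, hui, -⟩, -⟩ := rmap_of_matched hmu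
    obtain ⟨-, -, ⟨j, hvj, -⟩, -⟩ := rmap_of_matched hmv
    rcases hsafe with hn | hn | hn
    · rw [glue_bnd_rmap hu, hui] at hn; exact absurd hn (by simp)
    · rw [glue_bnd_rmap hv, hvj] at hn; exact absurd hn (by simp)
    · have := rmap_inj h1 h2 hu hv hn
      subst this
      exact h2.2.2.1 u hadj

/-- Inside a set with at most one boundary vertex, reachability between even vertices
restricts to the even vertices and transfers to any other glue with the same `G1`. -/
lemma reach_evens {t : ℕ} {G1 G2 G2' : BLG X} (h1 : G1.WF t) (h2 : G2.WF t) {S : Set ℕ}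
    (Hu : ∀ x ∈ S, ∀ y ∈ S, (glue G1 G2).bnd x ≠ none → (glue G1 G2).bnd y ≠ none → x = y)
    {a b : ℕ} (h : ReachIn (glue G1 G2) S a b) (haS : a ∈ S) (haE : a % 2 = 0)
    (hbE : b % 2 = 0) :
    ReachIn (glue G1 G2') {x | x ∈ S ∧ x % 2 = 0} a b := by
  have main : ∃ b₀, b₀ ∈ S ∧ b₀ % 2 = 0 ∧
      ReachIn (glue G1 G2') {x | x ∈ S ∧ x % 2 = 0} a b₀ ∧
      (b = b₀ ∨ (b % 2 = 1 ∧ (glue G1 G2).bnd b₀ ≠ none)) := by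
    clear hbE
    induction h with
    | refl => exact ⟨a, haS, haE, Relation.ReflTransGen.refl, Or.inl rfl⟩
    | @tail x y hax hxy ih =>
        obtain ⟨x₀, hx₀S, hx₀E, hre, hc⟩ := ih
        rcases hc with rfl | ⟨hxo, hx₀b⟩
        · rcases Nat.mod_two_eq_zero_or_one y with hye | hyo
          · refine ⟨y, hxy.2.2, hye, hre.tail ⟨?_, ⟨hx₀S, hx₀E⟩, ⟨hxy.2.2, hye⟩⟩, Or.inl rfl⟩
            refine glue_adj_even_transfer h1 h2 hxy.1 hx₀E hye ?_
            by_cases hbx : (glue G1 G2).bnd x = none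
            · exact Or.inl hbx
            by_cases hby : (glue G1 G2).bnd y = none
            · exact Or.inr (Or.inl hby)
            exact Or.inr (Or.inr (Hu _ hx₀S _ hxy.2.2 hbx hby))
          · exact ⟨x, hx₀S, hx₀E, hre,
              Or.inr ⟨hyo, glue_adj_mixed hxy.1 hx₀E hyo⟩⟩
        · rcases Nat.mod_two_eq_zero_or_one y with hye | hyo
          · have hyb : (glue G1 G2).bnd y ≠ none := glue_adj_mixed' hxy.1 hxo hye
            have : y = x₀ := Hu _ hxy.2.2 _ hx₀S hyb hx₀b
            exact ⟨x₀, hx₀S, hx₀E, hre, Or.inl this⟩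
          · exact ⟨x₀, hx₀S, hx₀E, hre, Or.inr ⟨hyo, hx₀b⟩⟩
  obtain ⟨b₀, -, -, hre, hc⟩ := main
  rcases hc with rfl | ⟨hbo, -⟩
  · exact hre
  · omega

/-- Pulling back reachability inside `S` to `G2`, with at most one boundary vertex in `S`. -/
lemma reach_pull_inv {t : ℕ} {G1 G2 : BLG X} (h1 : G1.WF t) (h2 : G2.WF t) {S : Set ℕ}
    {a b : ℕ} (h : ReachIn (glue G1 G2) S a b) (haS : a ∈ S)
    {a₀ : ℕ} (ha₀ : a₀ ∈ G2.verts) (haa : a = rmap G1 G2 a₀)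
    (Hu : ∀ x ∈ S, ∀ y ∈ S, (glue G1 G2).bnd x ≠ none → (glue G1 G2).bnd y ≠ none → x = y) :
    ∃ b₀, b₀ ∈ G2.verts ∧ rmap G1 G2 b₀ ∈ S ∧
      ReachIn G2 {w | w ∈ G2.verts ∧ rmap G1 G2 w ∈ S} a₀ b₀ ∧
      (b = rmap G1 G2 b₀ ∨ (b % 2 = 0 ∧ rmap G1 G2 b₀ % 2 = 0)) := by
  induction h with
  | refl => exact ⟨a₀, ha₀, haa ▸ haS, Relation.ReflTransGen.refl, Or.inl haa⟩
  | @tail x y hax hxy ih =>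
      obtain ⟨x₀, hx₀v, hx₀S, hre, hc⟩ := ih
      have key : ∀ x₀', x₀' ∈ G2.verts → rmap G1 G2 x₀' ∈ S → x = rmap G1 G2 x₀' →
          ReachIn G2 {w | w ∈ G2.verts ∧ rmap G1 G2 w ∈ S} a₀ x₀' →
          ∃ b₀, b₀ ∈ G2.verts ∧ rmap G1 G2 b₀ ∈ S ∧
            ReachIn G2 {w | w ∈ G2.verts ∧ rmap G1 G2 w ∈ S} a₀ b₀ ∧
            (y = rmap G1 G2 b₀ ∨ (y % 2 = 0 ∧ rmap G1 G2 b₀ % 2 = 0)) := by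
        intro x₀' hx₀'v hx₀'S hxe hre'
        rcases glue_adj_iff.1 hxy.1 with ⟨u, hu, v, hv, hadj, hxu, hyv⟩ |
          ⟨u, hu, v, hv, hadj, hxu, hyv⟩
        · -- G1-type edge: both even
          refine ⟨x₀', hx₀'v, hx₀'S, hre', Or.inr ⟨by omega, by rw [← hxe, hxu]; omega⟩⟩
        · -- G2-type edge
          have : u = x₀' := rmap_inj h1 h2 hu hx₀'v (by rw [← hxu, hxe])
          subst this
          exact ⟨v, hv, hyv ▸ hxy.2.2, hre'.tail ⟨hadj, ⟨hu, hx₀'S⟩, ⟨hv, hyv ▸ hxy.2.2⟩⟩,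
            Or.inl hyv⟩
      rcases hc with hxe | ⟨hxE, hx₀E⟩
      · exact key x₀ hx₀v hx₀S hxe hre
      · -- x is even; if the edge is of G2-type, x must coincide with rmap x₀
        rcases glue_adj_iff.1 hxy.1 with ⟨u, hu, v, hv, hadj, hxu, hyv⟩ |
          ⟨u, hu, v, hv, hadj, hxu, hyv⟩
        · exact ⟨x₀, hx₀v, hx₀S, hre, Or.inr ⟨by omega, hx₀E⟩⟩
        · have hmu : Matched G1 G2 u := rmap_even_iff.1 (by rw [← hxu]; omega)
          have hmx₀ : Matched G1 G2 x₀ := rmap_even_iff.1 hx₀E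
          obtain ⟨-, -, ⟨i, hui, -⟩, -⟩ := rmap_of_matched hmu
          obtain ⟨-, -, ⟨j, hx₀j, -⟩, -⟩ := rmap_of_matched hmx₀
          have hxb : (glue G1 G2).bnd x ≠ none := by
            rw [hxu, glue_bnd_rmap hu, hui]; simp
          have hx₀b : (glue G1 G2).bnd (rmap G1 G2 x₀) ≠ none := by
            rw [glue_bnd_rmap hx₀v, hx₀j]; simp
          have hxx : x = rmap G1 G2 x₀ := Hu _ hxy.2.1 _ hx₀S hxb hx₀b
          exact key x₀ hx₀v hx₀S hxx hre

lemma reach_pull {t : ℕ} {G1 G2 : BLG X} (h1 : G1.WF t) (h2 : G2.WF t) {S : Set ℕ}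
    {a b : ℕ} (h : ReachIn (glue G1 G2) S a b) (haS : a ∈ S) (hbS : b ∈ S)
    {a₀ b₀ : ℕ} (ha₀ : a₀ ∈ G2.verts) (haa : a = rmap G1 G2 a₀)
    (hb₀ : b₀ ∈ G2.verts) (hbb : b = rmap G1 G2 b₀)
    (Hu : ∀ x ∈ S, ∀ y ∈ S, (glue G1 G2).bnd x ≠ none → (glue G1 G2).bnd y ≠ none → x = y) :
    ReachIn G2 {w | w ∈ G2.verts ∧ rmap G1 G2 w ∈ S} a₀ b₀ := by
  obtain ⟨c₀, hc₀v, hc₀S, hre, hc⟩ := reach_pull_inv h1 h2 h haS ha₀ haa Hu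
  rcases hc with hbe | ⟨hbE, hc₀E⟩
  · have : b₀ = c₀ := rmap_inj h1 h2 hb₀ hc₀v (by rw [← hbb, hbe])
    exact this ▸ hre
  · have hmb : Matched G1 G2 b₀ := rmap_even_iff.1 (by rw [← hbb] at *; omega)
    have hmc : Matched G1 G2 c₀ := rmap_even_iff.1 hc₀E
    obtain ⟨-, -, ⟨i, hbi, -⟩, -⟩ := rmap_of_matched hmb
    obtain ⟨-, -, ⟨j, hcj, -⟩, -⟩ := rmap_of_matched hmc
    have hbb' : (glue G1 G2).bnd b ≠ none := by rw [hbb, glue_bnd_rmap hb₀, hbi]; simp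
    have hcb' : (glue G1 G2).bnd (rmap G1 G2 c₀) ≠ none := by
      rw [glue_bnd_rmap hc₀v, hcj]; simp
    have : b = rmap G1 G2 c₀ := Hu _ hbS _ hc₀S hbb' hcb'
    have : b₀ = c₀ := rmap_inj h1 h2 hb₀ hc₀v (by rw [← hbb, this])
    exact this ▸ hre

/-- If a set with at most one boundary vertex contains a `G2`-image and reaches a
boundary vertex `g`, then `g` is itself a `G2`-image. -/
lemma exit_lemma {t : ℕ} {G1 G2 : BLG X} (h1 : G1.WF t) (h2 : G2.WF t) {S : Set ℕ}
    {a g : ℕ} (h : ReachIn (glue G1 G2) S a g) (haS : a ∈ S) (hgS : g ∈ S)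
    {a₀ : ℕ} (ha₀ : a₀ ∈ G2.verts) (haa : a = rmap G1 G2 a₀) {i : ℕ}
    (hgb : (glue G1 G2).bnd g = some i)
    (Hu : ∀ x ∈ S, ∀ y ∈ S, (glue G1 G2).bnd x ≠ none → (glue G1 G2).bnd y ≠ none → x = y) :
    ∃ w, w ∈ G2.verts ∧ rmap G1 G2 w ∈ S ∧ rmap G1 G2 w = g ∧ G2.bnd w = some i := by
  obtain ⟨c₀, hc₀v, hc₀S, -, hc⟩ := reach_pull_inv h1 h2 h haS ha₀ haa Hu
  have hge : g = rmap G1 G2 c₀ := by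
    rcases hc with hbe | ⟨hbE, hc₀E⟩
    · exact hbe
    · have hmc : Matched G1 G2 c₀ := rmap_even_iff.1 hc₀E
      obtain ⟨-, -, ⟨j, hcj, -⟩, -⟩ := rmap_of_matched hmc
      have hcb' : (glue G1 G2).bnd (rmap G1 G2 c₀) ≠ none := by
        rw [glue_bnd_rmap hc₀v, hcj]; simp
      exact Hu _ hgS _ hc₀S (by rw [hgb]; simp) hcb'
  refine ⟨c₀, hc₀v, hc₀S, hge.symm, ?_⟩
  rw [← glue_bnd_rmap (G1 := G1) hc₀v, ← hge, hgb]

end Reach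

section UnionPcs

lemma unionOf_verts {P : Set (BLG X)} {x : ℕ} :
    x ∈ (unionOf P).verts ↔ ∃ p ∈ P, x ∈ p.verts := by
  simp [unionOf]

lemma unionOf_adj {P : Set (BLG X)} {a b : ℕ} :
    (unionOf P).Adj a b ↔ ∃ p ∈ P, p.Adj a b := Iff.rfl

lemma unionOf_label {P : Set (BLG X)} {x : ℕ} {l : X} :
    l ∈ (unionOf P).label x ↔ ∃ p ∈ P, l ∈ p.label x := by
  simp [unionOf]

lemma pcs_cases {Gq p : BLG X} (hp : p ∈ pcs Gq) :
    (∃ v ∈ Gq.verts, ∃ i, Gq.bnd v = some i ∧ p = singlePc v i (∅ : Set X)) ∨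
    (∃ v ∈ Gq.verts, ∃ i, Gq.bnd v = some i ∧ ∃ l ∈ Gq.label v, p = singlePc v i {l}) ∨
    (∃ u v i j, Gq.Adj u v ∧ Gq.bnd u = some i ∧ Gq.bnd v = some j ∧ p = edgePc u v i j) ∨
    (∃ C, IsCompOf Gq (interior Gq) C ∧ p = compPc Gq C) := by
  rcases hp with ((h | h) | h) | h
  · exact Or.inl h
  · exact Or.inr (Or.inl h)
  · exact Or.inr (Or.inr (Or.inl h))
  · exact Or.inr (Or.inr (Or.inr h))

lemma singlePc_verts {v i : ℕ} {L : Set X} {x : ℕ} :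
    x ∈ (singlePc v i L).verts ↔ x = v := by simp [singlePc]

lemma singlePc_bnd {v i : ℕ} {L : Set X} (x : ℕ) :
    (singlePc v i L).bnd x = if x = v then some i else none := rfl

lemma singlePc_label {v i : ℕ} {L : Set X} {x : ℕ} {l : X} :
    l ∈ (singlePc v i L).label x ↔ x = v ∧ l ∈ L := by
  show l ∈ (if x = v then L else ∅) ↔ _
  by_cases h : x = v <;> simp [h]

lemma singlePc_adj {v i : ℕ} {L : Set X} {a b : ℕ} : ¬ (singlePc v i L).Adj a b :=
  fun h => h

lemma edgePc_verts {u v i j : ℕ} {x : ℕ} :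
    x ∈ (edgePc u v i j : BLG X).verts ↔ x = u ∨ x = v := by simp [edgePc]

lemma edgePc_bnd {u v i j : ℕ} (x : ℕ) :
    (edgePc u v i j : BLG X).bnd x = if x = u then some i else if x = v then some j else none :=
  rfl

lemma edgePc_adj {u v i j : ℕ} {a b : ℕ} :
    (edgePc u v i j : BLG X).Adj a b ↔ (a = u ∧ b = v) ∨ (a = v ∧ b = u) := Iff.rfl

lemma edgePc_label {u v i j : ℕ} {x : ℕ} {l : X} : l ∉ (edgePc u v i j : BLG X).label x :=
  fun h => h

lemma compPc_verts {G : BLG X} {C : Set ℕ} {x : ℕ} :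
    x ∈ (compPc G C).verts ↔
      x ∈ C ∨ (x ∈ G.verts ∧ G.bnd x ≠ none ∧ ∃ c ∈ C, G.Adj x c) := by
  show x ∈ C ∪ {v | v ∈ G.verts ∧ G.bnd v ≠ none ∧ ∃ c ∈ C, G.Adj v c} ↔ _
  simp only [Set.mem_union, Set.mem_setOf_eq]

lemma compPc_bnd {G : BLG X} {C : Set ℕ} (x : ℕ) :
    (compPc G C).bnd x =
      if x ∈ C ∪ {v | v ∈ G.verts ∧ G.bnd v ≠ none ∧ ∃ c ∈ C, G.Adj v c}
      then G.bnd x else none := rfl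

lemma compPc_bnd_mem {G : BLG X} {C : Set ℕ} {x : ℕ} (hx : x ∈ (compPc G C).verts) :
    (compPc G C).bnd x = G.bnd x := by
  have hx' : x ∈ C ∪ {v | v ∈ G.verts ∧ G.bnd v ≠ none ∧ ∃ c ∈ C, G.Adj v c} := hx
  rw [compPc_bnd, if_pos hx']

lemma compPc_adj {G : BLG X} {C : Set ℕ} {a b : ℕ} :
    (compPc G C).Adj a b ↔
      G.Adj a b ∧ a ∈ (compPc G C).verts ∧ b ∈ (compPc G C).verts ∧
        ¬(G.bnd a ≠ none ∧ G.bnd b ≠ none) := Iff.rfl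

lemma compPc_label {G : BLG X} {C : Set ℕ} {x : ℕ} {l : X} :
    l ∈ (compPc G C).label x ↔ x ∈ C ∧ l ∈ G.label x := by
  show l ∈ (if x ∈ C then G.label x else ∅) ↔ _
  by_cases h : x ∈ C <;> simp [h]

lemma pcs_bnd_eq {Gq p : BLG X} (hp : p ∈ pcs Gq) {x : ℕ} (hx : p.bnd x ≠ none) :
    p.bnd x = Gq.bnd x := by
  rcases pcs_cases hp with ⟨v, hv, i, hvi, rfl⟩ | ⟨v, hv, i, hvi, l, hl, rfl⟩ |
    ⟨u, v, i, j, hadj, hui, hvj, rfl⟩ | ⟨C, hC, rfl⟩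
  · rw [singlePc_bnd] at hx ⊢
    by_cases h : x = v
    · subst h; rw [if_pos rfl, hvi]
    · rw [if_neg h] at hx; exact absurd rfl hx
  · rw [singlePc_bnd] at hx ⊢
    by_cases h : x = v
    · subst h; rw [if_pos rfl, hvi]
    · rw [if_neg h] at hx; exact absurd rfl hx
  · rw [edgePc_bnd] at hx ⊢
    by_cases h : x = u
    · subst h; rw [if_pos rfl, hui]
    · rw [if_neg h] at hx ⊢
      by_cases h' : x = v
      · subst h'; rw [if_pos rfl, hvj]
      · rw [if_neg h'] at hx; exact absurd rfl hx
  · rw [compPc_bnd] at hx ⊢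
    by_cases h : x ∈ C ∪ {v | v ∈ Gq.verts ∧ Gq.bnd v ≠ none ∧ ∃ c ∈ C, Gq.Adj v c}
    · rw [if_pos h]
    · rw [if_neg h] at hx; exact absurd rfl hx

lemma pcs_bnd_none {Gq p : BLG X} (hp : p ∈ pcs Gq) {x : ℕ} (hx : x ∈ p.verts)
    (hb : p.bnd x = none) : Gq.bnd x = none := by
  rcases pcs_cases hp with ⟨v, hv, i, hvi, rfl⟩ | ⟨v, hv, i, hvi, l, hl, rfl⟩ |
    ⟨u, v, i, j, hadj, hui, hvj, rfl⟩ | ⟨C, hC, rfl⟩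
  · rw [singlePc_verts.1 hx] at hb
    rw [singlePc_bnd, if_pos rfl] at hb; exact absurd hb (by simp)
  · rw [singlePc_verts.1 hx] at hb
    rw [singlePc_bnd, if_pos rfl] at hb; exact absurd hb (by simp)
  · rcases edgePc_verts.1 hx with rfl | rfl
    · rw [edgePc_bnd, if_pos rfl] at hb; exact absurd hb (by simp)
    · rw [edgePc_bnd] at hb
      by_cases h : x = u
      · rw [if_pos h] at hb; exact absurd hb (by simp)
      · rw [if_neg h, if_pos rfl] at hb; exact absurd hb (by simp)
  · rw [compPc_bnd_mem hx] at hb; exact hb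

lemma unionOf_bnd_eq_none {P : Set (BLG X)} {x : ℕ} (h : ∀ p ∈ P, p.bnd x = none) :
    (unionOf P).bnd x = none := by
  have h' : ¬ ∃ p, p ∈ P ∧ p.bnd x ≠ none := by
    rintro ⟨p, hp, hb⟩; exact hb (h p hp)
  show (if h : ∃ p, p ∈ P ∧ p.bnd x ≠ none then (Classical.choose h).bnd x else none) = none
  rw [dif_neg h']

lemma unionOf_bnd_eq {Gq : BLG X} {P : Set (BLG X)} (hP : P ⊆ pcs Gq) {p : BLG X}
    (hp : p ∈ P) {x : ℕ} (hb : p.bnd x ≠ none) : (unionOf P).bnd x = Gq.bnd x := by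
  have h' : ∃ q, q ∈ P ∧ q.bnd x ≠ none := ⟨p, hp, hb⟩
  show (if h : ∃ q, q ∈ P ∧ q.bnd x ≠ none then (Classical.choose h).bnd x else none) = _
  rw [dif_pos h']
  exact pcs_bnd_eq (hP (Classical.choose_spec h').1) (Classical.choose_spec h').2

lemma unionOf_bnd_cases {Gq : BLG X} {P : Set (BLG X)} (hP : P ⊆ pcs Gq) (x : ℕ) :
    (unionOf P).bnd x = none ∨
      ((unionOf P).bnd x = Gq.bnd x ∧ ∃ p ∈ P, p.bnd x ≠ none) := by
  by_cases h : ∃ p, p ∈ P ∧ p.bnd x ≠ none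
  · obtain ⟨p, hp, hb⟩ := h
    exact Or.inr ⟨unionOf_bnd_eq hP hp hb, p, hp, hb⟩
  · push_neg at h
    exact Or.inl (unionOf_bnd_eq_none h)

lemma U_bnd_some {Gq : BLG X} {P : Set (BLG X)} (hP : P ⊆ pcs Gq) {x : ℕ} {i : ℕ}
    (hb : (unionOf P).bnd x = some i) : Gq.bnd x = some i := by
  rcases unionOf_bnd_cases hP x with h | ⟨h, -⟩
  · rw [h] at hb; exact absurd hb (by simp)
  · rw [← h]; exact hb

lemma U_vert_interior {Gq : BLG X} {P : Set (BLG X)} (hP : P ⊆ pcs Gq) {x : ℕ}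
    (hx : x ∈ (unionOf P).verts) (hb : (unionOf P).bnd x = none) :
    ∃ C, IsCompOf Gq (interior Gq) C ∧ compPc Gq C ∈ P ∧ x ∈ C := by
  obtain ⟨p, hp, hxp⟩ := unionOf_verts.1 hx
  have hpb : p.bnd x = none := by
    by_contra h
    rw [unionOf_bnd_eq hP hp h] at hb
    exact h (by rw [pcs_bnd_eq (hP hp) h, hb])
  have hq : Gq.bnd x = none := pcs_bnd_none (hP hp) hxp hpb
  rcases pcs_cases (hP hp) with ⟨v, hv, i, hvi, rfl⟩ | ⟨v, hv, i, hvi, l, hl, rfl⟩ |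
    ⟨u, v, i, j, hadj, hui, hvj, rfl⟩ | ⟨C, hC, rfl⟩
  · rw [singlePc_verts.1 hxp] at hq; rw [hq] at hvi; exact absurd hvi (by simp)
  · rw [singlePc_verts.1 hxp] at hq; rw [hq] at hvi; exact absurd hvi (by simp)
  · rcases edgePc_verts.1 hxp with rfl | rfl
    · rw [hq] at hui; exact absurd hui (by simp)
    · rw [hq] at hvj; exact absurd hvj (by simp)
  · refine ⟨C, hC, hp, ?_⟩
    rcases compPc_verts.1 hxp with h | ⟨-, hbb, -⟩
    · exact h
    · exact absurd hq hbb

end UnionPcs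

section IsoMinor

lemma iso_refl (G : BLG X) : Iso G G :=
  ⟨id, Set.bijOn_id _, fun u _ v _ => Iff.rfl, fun v _ => rfl, fun v _ => rfl⟩

lemma minor_iso_right {H U G : BLG X} (hiso : Iso H U) (h : Minor U G) : Minor H G := by
  obtain ⟨f, hbij, hadj, hlab, hbnd⟩ := hiso
  obtain ⟨φ, hφ⟩ := h
  refine ⟨fun v => if v ∈ H.verts then φ (f v) else ∅, ?_⟩
  constructor
  · intro v hv; rw [if_pos hv]; exact hφ.sub _ (hbij.mapsTo hv)
  · intro v hv; rw [if_pos hv]; exact hφ.nonempty _ (hbij.mapsTo hv)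
  · intro v hv; rw [if_pos hv]; exact hφ.conn _ (hbij.mapsTo hv)
  · intro u hu v hv hne
    rw [if_pos hu, if_pos hv]
    exact hφ.disj _ (hbij.mapsTo hu) _ (hbij.mapsTo hv) (hbij.injOn.ne hu hv hne)
  · intro u hu v hv ha
    rw [if_pos hu, if_pos hv]
    exact hφ.edge _ (hbij.mapsTo hu) _ (hbij.mapsTo hv) ((hadj u hu v hv).1 ha)
  · intro v hv hb
    rw [if_pos hv]
    exact hφ.bnd_none _ (hbij.mapsTo hv) (by rw [hbnd v hv]; exact hb)
  · intro v hv i hb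
    rw [if_pos hv]
    exact hφ.bnd_some _ (hbij.mapsTo hv) i (by rw [hbnd v hv]; exact hb)
  · intro v hv x hx
    rw [if_pos hv]
    exact hφ.labels _ (hbij.mapsTo hv) x (by rw [hlab v hv]; exact hx)

lemma minor_iso_left {H U G : BLG X} (hiso : Iso H U) (h : Minor H G) : Minor U G := by
  obtain ⟨f, hbij, hadj, hlab, hbnd⟩ := hiso
  obtain ⟨φ, hφ⟩ := h
  set g := Function.invFunOn f H.verts with hg
  have hg1 : ∀ v ∈ U.verts, g v ∈ H.verts := fun v hv => hbij.surjOn.mapsTo_invFunOn hv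
  have hg2 : ∀ v ∈ U.verts, f (g v) = v := fun v hv => hbij.invOn_invFunOn.2 hv
  have hginj : ∀ u ∈ U.verts, ∀ v ∈ U.verts, u ≠ v → g u ≠ g v := by
    intro u hu v hv hne he
    exact hne (by rw [← hg2 u hu, ← hg2 v hv, he])
  refine ⟨fun v => if v ∈ U.verts then φ (g v) else ∅, ?_⟩
  constructor
  · intro v hv; rw [if_pos hv]; exact hφ.sub _ (hg1 v hv)
  · intro v hv; rw [if_pos hv]; exact hφ.nonempty _ (hg1 v hv)
  · intro v hv; rw [if_pos hv]; exact hφ.conn _ (hg1 v hv)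
  · intro u hu v hv hne
    rw [if_pos hu, if_pos hv]
    exact hφ.disj _ (hg1 u hu) _ (hg1 v hv) (hginj u hu v hv hne)
  · intro u hu v hv ha
    rw [if_pos hu, if_pos hv]
    refine hφ.edge _ (hg1 u hu) _ (hg1 v hv) ?_
    exact (hadj _ (hg1 u hu) _ (hg1 v hv)).2 (by rw [hg2 u hu, hg2 v hv]; exact ha)
  · intro v hv hb
    rw [if_pos hv]
    refine hφ.bnd_none _ (hg1 v hv) ?_
    rw [← hbnd _ (hg1 v hv), hg2 v hv]; exact hb
  · intro v hv i hb
    rw [if_pos hv]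
    refine hφ.bnd_some _ (hg1 v hv) i ?_
    rw [← hbnd _ (hg1 v hv), hg2 v hv]; exact hb
  · intro v hv x hx
    rw [if_pos hv]
    refine hφ.labels _ (hg1 v hv) x ?_
    rw [← hlab _ (hg1 v hv), hg2 v hv]; exact hx

lemma mem_mpcsPlus_iff {t : ℕ} {Q : Set (BLG X)} {H : BLG X} :
    H ∈ mpcsPlus t Q ↔ ∃ Gq ∈ extSet 0 t Q, H ∈ mpcs Gq := by
  simp [mpcsPlus, mpcsSet]

end IsoMinor

section Reach2

lemma reach_subset {G : BLG X} {S T : Set ℕ} (h : S ⊆ T) {a b : ℕ}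
    (hr : ReachIn G S a b) : ReachIn G T a b :=
  reach_mono (fun _ _ ha hu hv => ⟨ha, h hu, h hv⟩) hr

lemma reach_symm {G : BLG X} (hsym : ∀ a b, G.Adj a b → G.Adj b a) {S : Set ℕ} {a b : ℕ}
    (hr : ReachIn G S a b) : ReachIn G S b a := by
  induction hr with
  | refl => exact Relation.ReflTransGen.refl
  | tail h1 h2 ih =>
      exact (Relation.ReflTransGen.single ⟨hsym _ _ h2.1, h2.2.2, h2.2.1⟩).trans ih

lemma glue_adj_symm {t : ℕ} {G1 G2 : BLG X} (h1 : G1.WF t) (h2 : G2.WF t) {a b : ℕ}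
    (h : (glue G1 G2).Adj a b) : (glue G1 G2).Adj b a := by
  rcases glue_adj_iff.1 h with ⟨u, hu, v, hv, hadj, rfl, rfl⟩ | ⟨u, hu, v, hv, hadj, rfl, rfl⟩
  · exact glue_adj_G1 hv hu (h1.2.1 _ _ hadj)
  · exact glue_adj_G2 hv hu (h2.2.1 _ _ hadj)

lemma reach_parity {G1 G2 : BLG X} {S : Set ℕ}
    (hS : ∀ x ∈ S, (glue G1 G2).bnd x = none) {a b : ℕ}
    (h : ReachIn (glue G1 G2) S a b) : a % 2 = b % 2 := by
  induction h with
  | refl => rfl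
  | tail h1 h2 ih =>
      exact ih.trans (glue_adj_parity h2.1 (hS _ h2.2.1) (hS _ h2.2.2))

lemma parity_boundary {G1 G2 : BLG X} {S : Set ℕ} {a b : ℕ}
    (h : ReachIn (glue G1 G2) S a b) (haE : a % 2 = 0) (hbO : b % 2 = 1) :
    ∃ x ∈ S, x % 2 = 0 ∧ (glue G1 G2).bnd x ≠ none := by
  have main : b % 2 = 1 → ∃ x ∈ S, x % 2 = 0 ∧ (glue G1 G2).bnd x ≠ none := by
    clear hbO
    induction h with
    | refl => intro hb; omega
    | @tail x y hax hxy ih =>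
        intro hy
        rcases Nat.mod_two_eq_zero_or_one x with hxE | hxO
        · exact ⟨x, hxy.2.1, hxE, glue_adj_mixed hxy.1 hxE hy⟩
        · exact ih hxO
  exact main hbO

end Reach2

section Main

lemma U_bnd_of_Gq_none {Gq : BLG X} {P : Set (BLG X)} (hP : P ⊆ pcs Gq) {x : ℕ}
    (h : Gq.bnd x = none) : (unionOf P).bnd x = none := by
  rcases unionOf_bnd_cases hP x with h' | ⟨h', -⟩
  · exact h'
  · rw [h', h]

/-- The pieces of `P` that are kept for the `β`-side. -/
def Keep (Ga Gb1 Gq : BLG X) (φ : ℕ → Set ℕ) (p : BLG X) : Prop :=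
  (∀ v i, p.bnd v = some i → ∃ w ∈ Gb1.verts, Gb1.bnd w = some i) ∧
  (∀ v l, l ∈ p.label v → ∃ a ∈ φ v, ∃ w ∈ Gb1.verts, a = rmap Ga Gb1 w ∧ l ∈ Gb1.label w) ∧
  (∀ u v, p.Adj u v → ∃ a ∈ φ u, ∃ b ∈ φ v, ∃ w ∈ Gb1.verts, ∃ w' ∈ Gb1.verts,
      Gb1.Adj w w' ∧ a = rmap Ga Gb1 w ∧ b = rmap Ga Gb1 w') ∧
  (∀ v ∈ p.verts, Gq.bnd v = none → ∀ a ∈ φ v, a % 2 = 1)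

def Pbeta (Ga Gb1 Gq : BLG X) (φ : ℕ → Set ℕ) (P : Set (BLG X)) : Set (BLG X) :=
  {p | p ∈ P ∧ Keep Ga Gb1 Gq φ p}

def phiBeta (Ga Gb1 : BLG X) (φ : ℕ → Set ℕ) (v : ℕ) : Set ℕ :=
  {w | w ∈ Gb1.verts ∧ rmap Ga Gb1 w ∈ φ v}

/-- Context for the surgery argument. -/
structure Ctx (t : ℕ) (Ga Gb1 Gq : BLG X) (P : Set (BLG X)) (φ : ℕ → Set ℕ) : Prop where
  ha : Ga.WF t
  hb1 : Gb1.WF t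
  hP : P ⊆ pcs Gq
  mm : MinorModel (unionOf P) (glue Ga Gb1) φ

namespace Ctx

variable {t : ℕ} {Ga Gb1 Gq : BLG X} {P : Set (BLG X)} {φ : ℕ → Set ℕ}

lemma hu (c : Ctx t Ga Gb1 Gq P φ) {v : ℕ} (hv : v ∈ (unionOf P).verts) :
    ∀ x ∈ φ v, ∀ y ∈ φ v,
      (glue Ga Gb1).bnd x ≠ none → (glue Ga Gb1).bnd y ≠ none → x = y := by
  intro x hx y hy hbx hby
  cases hbv : (unionOf P).bnd v with
  | none => exact absurd (c.mm.bnd_none v hv hbv x hx) hbx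
  | some i =>
      have h1 := (c.mm.bnd_some v hv i hbv).1
      rcases h1 x hx with h | h
      · exact absurd h hbx
      rcases h1 y hy with h' | h'
      · exact absurd h' hby
      exact glue_bnd_inj c.ha c.hb1 h h'

lemma branch_par (c : Ctx t Ga Gb1 Gq P φ) {v : ℕ} (hv : v ∈ (unionOf P).verts) (hbv : (unionOf P).bnd v = none)
    {a b : ℕ} (haa : a ∈ φ v) (hbb : b ∈ φ v) : a % 2 = b % 2 :=
  reach_parity (fun x hx => c.mm.bnd_none v hv hbv x hx) (c.mm.conn v hv a haa b hbb)

lemma comp_par (c : Ctx t Ga Gb1 Gq P φ) {C : Set ℕ} (hC : IsCompOf Gq (interior Gq) C) (hpC : compPc Gq C ∈ P)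
    {u w : ℕ} (hu : u ∈ C) (hw : w ∈ C) {a b : ℕ} (haa : a ∈ φ u) (hbb : b ∈ φ w) :
    a % 2 = b % 2 := by
  obtain ⟨v₀, hv₀, hCeq⟩ := hC
  have hCint : ∀ x ∈ C, x ∈ interior Gq := by
    intro x hx; rw [hCeq] at hx; exact hx.1
  have hCvert : ∀ x ∈ C, x ∈ (unionOf P).verts := by
    intro x hx
    exact unionOf_verts.2 ⟨_, hpC, compPc_verts.2 (Or.inl hx)⟩
  have hCbnd : ∀ x ∈ C, (unionOf P).bnd x = none := by
    intro x hx
    exact U_bnd_of_Gq_none c.hP (hCint x hx).2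
  have key : ∀ x, ReachIn Gq (interior Gq) v₀ x → x ∈ C →
      ∀ a' ∈ φ v₀, ∀ b' ∈ φ x, a' % 2 = b' % 2 := by
    intro x hre
    induction hre with
    | refl =>
        intro hx a' ha' b' hb'
        exact c.branch_par (hCvert _ hx) (hCbnd _ hx) ha' hb'
    | @tail w' x hax hstep ih =>
        intro hx a' ha' b' hb'
        have hw'C : w' ∈ C := by rw [hCeq]; exact ⟨hstep.2.1, hax⟩
        have hUadj : (unionOf P).Adj w' x := by
          refine unionOf_adj.2 ⟨_, hpC, compPc_adj.2 ⟨hstep.1, ?_, ?_, ?_⟩⟩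
          · exact compPc_verts.2 (Or.inl hw'C)
          · exact compPc_verts.2 (Or.inl hx)
          · exact fun hcon => hcon.1 hstep.2.1.2
        obtain ⟨a'', ha'', b'', hb'', hadj⟩ :=
          c.mm.edge w' (hCvert _ hw'C) x (hCvert _ hx) hUadj
        have p1 := ih hw'C a' ha' a'' ha''
        have p2 : a'' % 2 = b'' % 2 :=
          glue_adj_parity hadj (c.mm.bnd_none _ (hCvert _ hw'C) (hCbnd _ hw'C) _ ha'')
            (c.mm.bnd_none _ (hCvert _ hx) (hCbnd _ hx) _ hb'')
        have p3 := c.branch_par (hCvert _ hx) (hCbnd _ hx) hb'' hb'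
        omega
  have hu' : u ∈ interior Gq ∧ ReachIn Gq (interior Gq) v₀ u := by
    rw [hCeq] at hu; exact hu
  have hw' : w ∈ interior Gq ∧ ReachIn Gq (interior Gq) v₀ w := by
    rw [hCeq] at hw; exact hw
  obtain ⟨a₀, ha₀⟩ := c.mm.nonempty v₀
    (hCvert v₀ (by rw [hCeq]; exact ⟨hv₀, Relation.ReflTransGen.refl⟩))
  have h1 := key u hu'.2 hu a₀ ha₀ a haa
  have h2 := key w hw'.2 hw a₀ ha₀ b hbb
  omega

lemma idx_match (c : Ctx t Ga Gb1 Gq P φ) {v : ℕ} (hv : v ∈ (unionOf P).verts) {i : ℕ}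
    (hbv : (unionOf P).bnd v = some i) {a w : ℕ} (haφ : a ∈ φ v) (hw : w ∈ Gb1.verts)
    (haw : a = rmap Ga Gb1 w) : ∃ w', w' ∈ Gb1.verts ∧ Gb1.bnd w' = some i := by
  obtain ⟨g, hgφ, hgb⟩ := (c.mm.bnd_some v hv i hbv).2
  obtain ⟨w', hw', -, -, hwb⟩ :=
    exit_lemma c.ha c.hb1 (c.mm.conn v hv a haφ g hgφ) haφ hgφ hw haw hgb (c.hu hv)
  exact ⟨w', hw', hwb⟩

lemma keep_single (v i : ℕ) (hq : Gq.bnd v = some i)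
    (h : ∃ w ∈ Gb1.verts, Gb1.bnd w = some i) :
    Keep Ga Gb1 Gq φ (singlePc v i (∅ : Set X)) := by
  refine ⟨?_, ?_, ?_, ?_⟩
  · intro v₁ i₁ hb
    rw [singlePc_bnd] at hb
    by_cases hv₁ : v₁ = v
    · rw [if_pos hv₁] at hb
      injection hb with hb'
      subst hb'
      exact h
    · rw [if_neg hv₁] at hb; exact absurd hb (by simp)
  · intro v₁ l hl
    exact absurd (singlePc_label.1 hl).2 (Set.notMem_empty l)
  · intro u₁ v₁ hadj; exact absurd hadj singlePc_adj
  · intro v₁ hv₁ hbq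
    rw [singlePc_verts.1 hv₁] at hbq
    rw [hbq] at hq
    exact absurd hq (by simp)

lemma keep_label (v i : ℕ) (l : X) (hq : Gq.bnd v = some i)
    (hreal : ∃ a ∈ φ v, ∃ w ∈ Gb1.verts, a = rmap Ga Gb1 w ∧ l ∈ Gb1.label w)
    (hidx : ∃ w ∈ Gb1.verts, Gb1.bnd w = some i) :
    Keep Ga Gb1 Gq φ (singlePc v i ({l} : Set X)) := by
  refine ⟨?_, ?_, ?_, ?_⟩
  · intro v₁ i₁ hb
    rw [singlePc_bnd] at hb
    by_cases hv₁ : v₁ = v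
    · rw [if_pos hv₁] at hb
      injection hb with hb'
      subst hb'
      exact hidx
    · rw [if_neg hv₁] at hb; exact absurd hb (by simp)
  · intro v₁ l₁ hl
    obtain ⟨rfl, hl₁⟩ := singlePc_label.1 hl
    rw [Set.mem_singleton_iff.1 hl₁]
    exact hreal
  · intro u₁ v₁ hadj; exact absurd hadj singlePc_adj
  · intro v₁ hv₁ hbq
    rw [singlePc_verts.1 hv₁] at hbq
    rw [hbq] at hq
    exact absurd hq (by simp)

lemma keep_edge (hb1 : Gb1.WF t) (u v i j : ℕ)
    (hqu : Gq.bnd u = some i) (hqv : Gq.bnd v = some j)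
    (hreal : ∃ a ∈ φ u, ∃ b ∈ φ v, ∃ w ∈ Gb1.verts, ∃ w' ∈ Gb1.verts,
        Gb1.Adj w w' ∧ a = rmap Ga Gb1 w ∧ b = rmap Ga Gb1 w')
    (hiu : ∃ w ∈ Gb1.verts, Gb1.bnd w = some i)
    (hjv : ∃ w ∈ Gb1.verts, Gb1.bnd w = some j) :
    Keep Ga Gb1 Gq φ (edgePc u v i j) := by
  refine ⟨?_, ?_, ?_, ?_⟩
  · intro v₁ i₁ hb
    rw [edgePc_bnd] at hb
    by_cases h1 : v₁ = u
    · rw [if_pos h1] at hb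
      injection hb with hb'
      subst hb'
      exact hiu
    · rw [if_neg h1] at hb
      by_cases h2 : v₁ = v
      · rw [if_pos h2] at hb
        injection hb with hb'
        subst hb'
        exact hjv
      · rw [if_neg h2] at hb; exact absurd hb (by simp)
  · intro v₁ l hl; exact absurd hl edgePc_label
  · intro u₁ v₁ hadj
    rcases edgePc_adj.1 hadj with ⟨rfl, rfl⟩ | ⟨rfl, rfl⟩
    · exact hreal
    · obtain ⟨a, ha, b, hb, w, hw, w', hw', hadj', haw, hbw⟩ := hreal
      exact ⟨b, hb, a, ha, w', hw', w, hw, hb1.2.1 _ _ hadj', hbw, haw⟩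
  · intro v₁ hv₁ hbq
    rcases edgePc_verts.1 hv₁ with rfl | rfl
    · rw [hbq] at hqu; exact absurd hqu (by simp)
    · rw [hbq] at hqv; exact absurd hqv (by simp)

lemma keep_comp (c : Ctx t Ga Gb1 Gq P φ) {C : Set ℕ}
    (hC : IsCompOf Gq (interior Gq) C) (hpC : compPc Gq C ∈ P)
    (hodd : ∃ v ∈ C, ∃ a ∈ φ v, a % 2 = 1) : Keep Ga Gb1 Gq φ (compPc Gq C) := by
  obtain ⟨v₂, hv₂C, a₂, ha₂, ha₂o⟩ := hodd
  have hCint : ∀ x ∈ C, x ∈ interior Gq := by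
    obtain ⟨v₀, hv₀, hCeq⟩ := hC
    intro x hx; rw [hCeq] at hx; exact hx.1
  have hCvert : ∀ x ∈ C, x ∈ (unionOf P).verts := by
    intro x hx
    exact unionOf_verts.2 ⟨_, hpC, compPc_verts.2 (Or.inl hx)⟩
  have hAllOdd : ∀ x ∈ C, ∀ b ∈ φ x, b % 2 = 1 := by
    intro x hx b hb
    have := c.comp_par hC hpC hv₂C hx ha₂ hb
    omega
  refine ⟨?_, ?_, ?_, ?_⟩
  · -- boundary indices of the piece occur in Gb1
    intro v₁ i₁ hb
    rw [compPc_bnd] at hb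
    by_cases hmem : v₁ ∈ C ∪ {w | w ∈ Gq.verts ∧ Gq.bnd w ≠ none ∧ ∃ c' ∈ C, Gq.Adj w c'}
    · rw [if_pos hmem] at hb
      have hv₁N : v₁ ∈ Gq.verts ∧ Gq.bnd v₁ ≠ none ∧ ∃ c' ∈ C, Gq.Adj v₁ c' := by
        rcases hmem with h | h
        · exact absurd (hCint _ h).2 (by rw [hb]; simp)
        · exact h
      obtain ⟨hv₁q, hv₁b, c', hc'C, hadjq⟩ := hv₁N
      have hv₁m : v₁ ∈ (compPc Gq C).verts :=
        compPc_verts.2 (Or.inr ⟨hv₁q, hv₁b, c', hc'C, hadjq⟩)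
      have hUadj : (unionOf P).Adj v₁ c' :=
        unionOf_adj.2 ⟨_, hpC, compPc_adj.2 ⟨hadjq, hv₁m,
          compPc_verts.2 (Or.inl hc'C), fun hcon => hcon.2 (hCint _ hc'C).2⟩⟩
      have hv₁U : v₁ ∈ (unionOf P).verts := unionOf_verts.2 ⟨_, hpC, hv₁m⟩
      obtain ⟨a, haφ, b, hbφ, hadj⟩ := c.mm.edge v₁ hv₁U c' (hCvert c' hc'C) hUadj
      have hbO := hAllOdd c' hc'C b hbφ
      have hex : ∃ w ∈ Gb1.verts, a = rmap Ga Gb1 w := by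
        rcases glue_adj_iff.1 hadj with ⟨u', hu', v', hv', -, ha2, hb2⟩ |
          ⟨u', hu', v', hv', -, ha2, hb2⟩
        · omega
        · exact ⟨u', hu', ha2⟩
      obtain ⟨w, hw, haw⟩ := hex
      have hbne : (compPc Gq C).bnd v₁ ≠ none := by
        rw [compPc_bnd, if_pos hmem, hb]; simp
      have hUb : (unionOf P).bnd v₁ = some i₁ := by
        rw [unionOf_bnd_eq c.hP hpC hbne, hb]
      exact c.idx_match hv₁U hUb haφ hw haw
    · rw [if_neg hmem] at hb; exact absurd hb (by simp)
  · -- labels realized on the β-side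
    intro v₁ l hl
    obtain ⟨hv₁C, hlq⟩ := compPc_label.1 hl
    have hv₁U := hCvert v₁ hv₁C
    have hlU : l ∈ (unionOf P).label v₁ := unionOf_label.2 ⟨_, hpC, hl⟩
    obtain ⟨a, haφ, hla⟩ := c.mm.labels v₁ hv₁U l hlU
    have haO := hAllOdd v₁ hv₁C a haφ
    rcases glue_label_iff.1 hla with ⟨w, hw, haw, hlw⟩ | ⟨w, hw, haw, hlw⟩
    · omega
    · exact ⟨a, haφ, w, hw, haw, hlw⟩
  · -- edges realized on the β-side
    intro u₁ v₁ hadj₁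
    obtain ⟨hq, hu₁m, hv₁m, hnb⟩ := compPc_adj.1 hadj₁
    have hu₁U : u₁ ∈ (unionOf P).verts := unionOf_verts.2 ⟨_, hpC, hu₁m⟩
    have hv₁U : v₁ ∈ (unionOf P).verts := unionOf_verts.2 ⟨_, hpC, hv₁m⟩
    obtain ⟨a, haφ, b, hbφ, hadj⟩ :=
      c.mm.edge u₁ hu₁U v₁ hv₁U (unionOf_adj.2 ⟨_, hpC, hadj₁⟩)
    have hone : u₁ ∈ C ∨ v₁ ∈ C := by
      by_cases h : Gq.bnd u₁ = none
      · left
        rcases compPc_verts.1 hu₁m with h' | h'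
        · exact h'
        · exact absurd h h'.2.1
      · right
        have h' : Gq.bnd v₁ = none := by
          by_contra h''
          exact hnb ⟨h, h''⟩
        rcases compPc_verts.1 hv₁m with h'' | h''
        · exact h''
        · exact absurd h' h''.2.1
    rcases glue_adj_iff.1 hadj with ⟨u', hu', v', hv', -, ha2, hb2⟩ |
      ⟨u', hu', v', hv', hb1adj, ha2, hb2⟩
    · exfalso
      rcases hone with h | h
      · have := hAllOdd u₁ h a haφ; omega
      · have := hAllOdd v₁ h b hbφ; omega
    · exact ⟨a, haφ, b, hbφ, u', hu', v', hv', hb1adj, ha2, hb2⟩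
  · -- interior branch sets are odd
    intro v₁ hv₁ hbq b hb
    have hv₁C : v₁ ∈ C := by
      rcases compPc_verts.1 hv₁ with h | h
      · exact h
      · exact absurd hbq h.2.1
    exact hAllOdd v₁ hv₁C b hb

lemma Pbeta_pcs (c : Ctx t Ga Gb1 Gq P φ) : Pbeta Ga Gb1 Gq φ P ⊆ pcs Gq :=
  fun p hp => c.hP hp.1

lemma Ub_verts_sub (c : Ctx t Ga Gb1 Gq P φ) {v : ℕ}
    (hv : v ∈ (unionOf (Pbeta Ga Gb1 Gq φ P)).verts) : v ∈ (unionOf P).verts := by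
  obtain ⟨p, hp, hvp⟩ := unionOf_verts.1 hv
  exact unionOf_verts.2 ⟨p, hp.1, hvp⟩

lemma Ub_bnd_none (c : Ctx t Ga Gb1 Gq P φ) {v : ℕ}
    (hv : v ∈ (unionOf (Pbeta Ga Gb1 Gq φ P)).verts)
    (hb : (unionOf (Pbeta Ga Gb1 Gq φ P)).bnd v = none) : (unionOf P).bnd v = none := by
  obtain ⟨p, hp, hvp⟩ := unionOf_verts.1 hv
  by_cases hpb : p.bnd v = none
  · exact U_bnd_of_Gq_none c.hP (pcs_bnd_none (c.hP hp.1) hvp hpb)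
  · rw [unionOf_bnd_eq (c.Pbeta_pcs) hp hpb] at hb
    rw [unionOf_bnd_eq c.hP hp.1 hpb, hb]

lemma Ub_bnd_some (c : Ctx t Ga Gb1 Gq P φ) {v : ℕ} {i : ℕ}
    (hb : (unionOf (Pbeta Ga Gb1 Gq φ P)).bnd v = some i) :
    (unionOf P).bnd v = some i := by
  rcases unionOf_bnd_cases (c.Pbeta_pcs) v with h | ⟨h, p, hp, hpb⟩
  · rw [h] at hb; exact absurd hb (by simp)
  · rw [unionOf_bnd_eq c.hP hp.1 hpb, ← h, hb]

lemma Ub_bnd_some_of (c : Ctx t Ga Gb1 Gq P φ) {v : ℕ} {i : ℕ}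
    (hv : v ∈ (unionOf (Pbeta Ga Gb1 Gq φ P)).verts)
    (hb : (unionOf P).bnd v = some i) : (unionOf (Pbeta Ga Gb1 Gq φ P)).bnd v = some i := by
  obtain ⟨p, hp, hvp⟩ := unionOf_verts.1 hv
  have hpb : p.bnd v ≠ none := by
    intro hpb
    have := U_bnd_of_Gq_none c.hP (pcs_bnd_none (c.hP hp.1) hvp hpb)
    rw [this] at hb; exact absurd hb (by simp)
  rw [unionOf_bnd_eq (c.Pbeta_pcs) hp hpb, ← unionOf_bnd_eq c.hP hp.1 hpb, hb]

lemma bnd_witness (c : Ctx t Ga Gb1 Gq P φ) {v : ℕ} (hv : v ∈ (unionOf P).verts) {i : ℕ}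
    (hbv : (unionOf P).bnd v = some i) {w : ℕ} (hw : w ∈ Gb1.verts)
    (hwb : Gb1.bnd w = some i) : rmap Ga Gb1 w ∈ φ v := by
  obtain ⟨g, hg, hgb⟩ := (c.mm.bnd_some v hv i hbv).2
  have hr : (glue Ga Gb1).bnd (rmap Ga Gb1 w) = some i := by
    rw [glue_bnd_rmap hw, hwb]
  rw [glue_bnd_inj c.ha c.hb1 hr hgb]
  exact hg

lemma beta_model (c : Ctx t Ga Gb1 Gq P φ) :
    MinorModel (unionOf (Pbeta Ga Gb1 Gq φ P)) Gb1 (phiBeta Ga Gb1 φ) := by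
  constructor
  · -- sub
    intro v hv w hw
    exact hw.1
  · -- nonempty
    intro v hv
    have hvU := c.Ub_verts_sub hv
    cases hbv : (unionOf (Pbeta Ga Gb1 Gq φ P)).bnd v with
    | some i =>
        have hUb := c.Ub_bnd_some hbv
        rcases unionOf_bnd_cases (c.Pbeta_pcs) v with h | ⟨h, p, hp, hpb⟩
        · rw [h] at hbv; exact absurd hbv (by simp)
        · have hpv : p.bnd v = some i := by
            rw [pcs_bnd_eq (c.hP hp.1) hpb, ← h, hbv]
          obtain ⟨w, hw, hwb⟩ := hp.2.1 v i hpv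
          exact ⟨w, hw, c.bnd_witness hvU hUb hw hwb⟩
    | none =>
        have hUb := c.Ub_bnd_none hv hbv
        obtain ⟨p, hp, hvp⟩ := unionOf_verts.1 hv
        have hpb : p.bnd v = none := by
          by_contra hpb
          rw [unionOf_bnd_eq (c.Pbeta_pcs) hp hpb] at hbv
          have := pcs_bnd_eq (c.hP hp.1) hpb
          rw [hbv] at this
          exact hpb this
        have hGq : Gq.bnd v = none := pcs_bnd_none (c.hP hp.1) hvp hpb
        obtain ⟨a, ha⟩ := c.mm.nonempty v hvU
        have haO := hp.2.2.2.2 v hvp hGq a ha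
        obtain ⟨h2, -, hr⟩ := glue_odd (c.mm.sub v hvU ha) haO
        exact ⟨a / 2, h2, by rw [hr]; exact ha⟩
  · -- conn
    intro v hv a ha b hb
    have hvU := c.Ub_verts_sub hv
    exact reach_pull c.ha c.hb1 (c.mm.conn v hvU _ ha.2 _ hb.2) ha.2 hb.2 ha.1 rfl hb.1 rfl
      (c.hu hvU)
  · -- disj
    intro u hu v hv hne
    rw [Set.disjoint_left]
    intro w hwu hwv
    exact Set.disjoint_left.1
      (c.mm.disj u (c.Ub_verts_sub hu) v (c.Ub_verts_sub hv) hne) hwu.2 hwv.2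
  · -- edge
    intro u hu v hv hadj
    obtain ⟨p, hp, hpadj⟩ := unionOf_adj.1 hadj
    obtain ⟨a, ha, b, hb, w, hw, w', hw', badj, haw, hbw⟩ := hp.2.2.2.1 u v hpadj
    exact ⟨w, ⟨hw, haw ▸ ha⟩, w', ⟨hw', hbw ▸ hb⟩, badj⟩
  · -- bnd_none
    intro v hv hb w hw
    have hvU := c.Ub_verts_sub hv
    rw [← glue_bnd_rmap (G1 := Ga) hw.1]
    exact c.mm.bnd_none v hvU (c.Ub_bnd_none hv hb) _ hw.2
  · -- bnd_some
    intro v hv i hb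
    have hvU := c.Ub_verts_sub hv
    have hUb := c.Ub_bnd_some hb
    constructor
    · intro w hw
      rw [← glue_bnd_rmap (G1 := Ga) hw.1]
      exact (c.mm.bnd_some v hvU i hUb).1 _ hw.2
    · rcases unionOf_bnd_cases (c.Pbeta_pcs) v with h | ⟨h, p, hp, hpb⟩
      · rw [h] at hb; exact absurd hb (by simp)
      · have hpv : p.bnd v = some i := by
          rw [pcs_bnd_eq (c.hP hp.1) hpb, ← h, hb]
        obtain ⟨w, hw, hwb⟩ := hp.2.1 v i hpv
        exact ⟨w, ⟨hw, c.bnd_witness hvU hUb hw hwb⟩, hwb⟩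
  · -- labels
    intro v hv l hl
    obtain ⟨p, hp, hlp⟩ := unionOf_label.1 hl
    obtain ⟨a, ha, w, hw, haw, hlw⟩ := hp.2.2.1 v l hlp
    exact ⟨w, ⟨hw, haw ▸ ha⟩, hlw⟩

lemma rmap_odd_of_bnd_none (c : Ctx t Ga Gb1 Gq P φ) {w : ℕ} (hw : w ∈ Gb1.verts)
    (h : (glue Ga Gb1).bnd (rmap Ga Gb1 w) = none) : rmap Ga Gb1 w % 2 = 1 := by
  rcases Nat.mod_two_eq_zero_or_one (rmap Ga Gb1 w) with hE | hO
  · exfalso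
    obtain ⟨-, -, ⟨i, hbi, -⟩, -⟩ := rmap_of_matched (rmap_even_iff.1 hE)
    rw [glue_bnd_rmap hw, hbi] at h
    exact absurd h (by simp)
  · exact hO

lemma U_bnd_eq_piece (c : Ctx t Ga Gb1 Gq P φ) {p : BLG X} (hp : p ∈ P) {x i : ℕ}
    (hb : p.bnd x = some i) : (unionOf P).bnd x = some i := by
  have hne : p.bnd x ≠ none := by rw [hb]; simp
  rw [unionOf_bnd_eq c.hP hp hne, ← pcs_bnd_eq (c.hP hp) hne, hb]

lemma U_bnd_inj (c : Ctx t Ga Gb1 Gq P φ) {u v j : ℕ} (huv : u ∈ (unionOf P).verts)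
    (hvv : v ∈ (unionOf P).verts) (hu : (unionOf P).bnd u = some j)
    (hv : (unionOf P).bnd v = some j) : u = v := by
  by_contra hne
  obtain ⟨gu, hgu, hgub⟩ := (c.mm.bnd_some u huv j hu).2
  obtain ⟨gv, hgv, hgvb⟩ := (c.mm.bnd_some v hvv j hv).2
  have := glue_bnd_inj c.ha c.hb1 hgub hgvb
  subst this
  exact Set.disjoint_left.1 (c.mm.disj u huv v hvv hne) hgu hgv

lemma interior_dichotomy (c : Ctx t Ga Gb1 Gq P φ) {v : ℕ} (hv : v ∈ (unionOf P).verts)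
    (hbv : (unionOf P).bnd v = none) :
    (∀ a ∈ φ v, a % 2 = 1) ∨ (∀ a ∈ φ v, a % 2 = 0) := by
  obtain ⟨a₀, ha₀⟩ := c.mm.nonempty v hv
  rcases Nat.mod_two_eq_zero_or_one a₀ with hE | hO
  · right; intro a ha
    have := c.branch_par hv hbv ha₀ ha; omega
  · left; intro a ha
    have := c.branch_par hv hbv ha₀ ha; omega

lemma interior_odd_in_beta (c : Ctx t Ga Gb1 Gq P φ) {v : ℕ} (hv : v ∈ (unionOf P).verts)
    (hbv : (unionOf P).bnd v = none) (hodd : ∃ a ∈ φ v, a % 2 = 1) :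
    v ∈ (unionOf (Pbeta Ga Gb1 Gq φ P)).verts := by
  obtain ⟨C, hC, hpC, hvC⟩ := U_vert_interior c.hP hv hbv
  obtain ⟨a, ha, haO⟩ := hodd
  have hkeep := c.keep_comp hC hpC ⟨v, hvC, a, ha, haO⟩
  exact unionOf_verts.2 ⟨_, ⟨hpC, hkeep⟩, compPc_verts.2 (Or.inl hvC)⟩

lemma beta_interior_odd (c : Ctx t Ga Gb1 Gq P φ) {v : ℕ}
    (hvβ : v ∈ (unionOf (Pbeta Ga Gb1 Gq φ P)).verts)
    (hbv : (unionOf P).bnd v = none) : ∀ a ∈ φ v, a % 2 = 1 := by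
  obtain ⟨p, hp, hvp⟩ := unionOf_verts.1 hvβ
  have hpb : p.bnd v = none := by
    rcases h : p.bnd v with - | i
    · rfl
    · exfalso
      have h2 := c.U_bnd_eq_piece hp.1 h
      rw [h2] at hbv
      exact Option.some_ne_none _ hbv
  exact hp.2.2.2.2 v hvp (pcs_bnd_none (c.hP hp.1) hvp hpb)

lemma g_even (c : Ctx t Ga Gb1 Gq P φ) {v : ℕ} (hv : v ∈ (unionOf P).verts) {i : ℕ}
    (hbv : (unionOf P).bnd v = some i) {g : ℕ} (hgφ : g ∈ φ v)
    (hgb : (glue Ga Gb1).bnd g = some i) {e : ℕ} (he : e ∈ φ v) (heE : e % 2 = 0) :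
    g % 2 = 0 := by
  by_contra hgO
  have hgO' : g % 2 = 1 := by omega
  obtain ⟨x, hxφ, hxE, hxb⟩ :=
    parity_boundary (c.mm.conn v hv e he g hgφ) heE hgO'
  have := c.hu hv x hxφ g hgφ hxb (by rw [hgb]; simp)
  omega

lemma odd_g_in_beta (c : Ctx t Ga Gb1 Gq P φ) {v : ℕ} (hv : v ∈ (unionOf P).verts) {i : ℕ}
    (hbv : (unionOf P).bnd v = some i) {g : ℕ} (hgφ : g ∈ φ v)
    (hgb : (glue Ga Gb1).bnd g = some i) (hgO : g % 2 = 1) :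
    v ∈ (unionOf (Pbeta Ga Gb1 Gq φ P)).verts := by
  -- index i occurs in Gb1
  have hgv : g ∈ (glue Ga Gb1).verts := c.mm.sub v hv hgφ
  obtain ⟨hg2, -, hgr⟩ := glue_odd hgv hgO
  have hidx : ∃ w ∈ Gb1.verts, Gb1.bnd w = some i :=
    ⟨g / 2, hg2, by rw [← glue_bnd_rmap (G1 := Ga) hg2, hgr, hgb]⟩
  have hGqv : Gq.bnd v = some i := U_bnd_some c.hP hbv
  obtain ⟨p, hp, hvp⟩ := unionOf_verts.1 hv
  rcases pcs_cases (c.hP hp) with ⟨v', hv', i', hvi', rfl⟩ | ⟨v', hv', i', hvi', l, hl, rfl⟩ |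
    ⟨u', v', i', j', hadjq, hqu, hqv, rfl⟩ | ⟨C, hC, rfl⟩
  · -- plain boundary singleton
    have hvv' : v = v' := singlePc_verts.1 hvp
    subst hvv'
    have hii : i' = i := by rw [hGqv] at hvi'; injection hvi' with h; omega
    have hidx' : ∃ w ∈ Gb1.verts, Gb1.bnd w = some i' := by rw [hii]; exact hidx
    exact unionOf_verts.2 ⟨_, ⟨hp, keep_single v i' hvi' hidx'⟩, singlePc_verts.2 rfl⟩
  · -- label singleton
    have hvv' : v = v' := singlePc_verts.1 hvp
    subst hvv'
    have hii : i' = i := by rw [hGqv] at hvi'; injection hvi' with h; omega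
    have hidx' : ∃ w ∈ Gb1.verts, Gb1.bnd w = some i' := by rw [hii]; exact hidx
    have hlU : l ∈ (unionOf P).label v :=
      unionOf_label.2 ⟨_, hp, singlePc_label.2 ⟨rfl, rfl⟩⟩
    obtain ⟨a, haφ, hla⟩ := c.mm.labels v hv l hlU
    rcases glue_label_iff.1 hla with ⟨w, hw, haw, hlw⟩ | ⟨w, hw, haw, hlw⟩
    · exfalso
      have : a % 2 = 0 := by omega
      have := c.g_even hv hbv hgφ hgb haφ this
      omega
    · exact unionOf_verts.2 ⟨_, ⟨hp, keep_label v i' l hvi' ⟨a, haφ, w, hw, haw, hlw⟩ hidx'⟩,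
        singlePc_verts.2 rfl⟩
  · -- edge piece
    have hu'U : u' ∈ (unionOf P).verts :=
      unionOf_verts.2 ⟨_, hp, edgePc_verts.2 (Or.inl rfl)⟩
    have hv'U : v' ∈ (unionOf P).verts :=
      unionOf_verts.2 ⟨_, hp, edgePc_verts.2 (Or.inr rfl)⟩
    have hUadj : (unionOf P).Adj u' v' :=
      unionOf_adj.2 ⟨_, hp, edgePc_adj.2 (Or.inl ⟨rfl, rfl⟩)⟩
    obtain ⟨a, haφ, b, hbφ, hadj⟩ := c.mm.edge u' hu'U v' hv'U hUadj
    rcases glue_adj_iff.1 hadj with ⟨w, hwa, w', hw', -, ha2, hb2⟩ |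
      ⟨w, hw, w', hw', badj, ha2, hb2⟩
    · exfalso
      rcases edgePc_verts.1 hvp with rfl | rfl
      · have := c.g_even hv hbv hgφ hgb haφ (by omega)
        omega
      · have := c.g_even hv hbv hgφ hgb hbφ (by omega)
        omega
    · have hneu : (edgePc u' v' i' j' : BLG X).bnd u' ≠ none := by
        rw [edgePc_bnd, if_pos rfl]; simp
      have hnev : (edgePc u' v' i' j' : BLG X).bnd v' ≠ none := by
        rw [edgePc_bnd]
        by_cases h : v' = u' <;> simp [h]
      have hUbu : (unionOf P).bnd u' = some i' := by
        rw [unionOf_bnd_eq c.hP hp hneu, hqu]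
      have hUbv : (unionOf P).bnd v' = some j' := by
        rw [unionOf_bnd_eq c.hP hp hnev, hqv]
      have hiu := c.idx_match hu'U hUbu haφ hw ha2
      have hjv := c.idx_match hv'U hUbv hbφ hw' hb2
      have hkeep := keep_edge (Gq := Gq) (φ := φ) c.hb1 u' v' i' j' hqu hqv
        ⟨a, haφ, b, hbφ, w, hw, w', hw', badj, ha2, hb2⟩ hiu hjv
      exact unionOf_verts.2 ⟨_, ⟨hp, hkeep⟩, hvp⟩
  · -- component piece: v is a neighbouring boundary vertex
    have hCint : ∀ x ∈ C, x ∈ interior Gq := by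
      obtain ⟨v₀, hv₀, hCeq⟩ := hC
      intro x hx; rw [hCeq] at hx; exact hx.1
    rcases compPc_verts.1 hvp with h | ⟨hvq, hvb, c', hc'C, hadjq⟩
    · exact absurd (hCint _ h).2 (by rw [hGqv]; simp)
    · have hc'U : c' ∈ (unionOf P).verts :=
        unionOf_verts.2 ⟨_, hp, compPc_verts.2 (Or.inl hc'C)⟩
      have hUadj : (unionOf P).Adj v c' :=
        unionOf_adj.2 ⟨_, hp, compPc_adj.2 ⟨hadjq, hvp,
          compPc_verts.2 (Or.inl hc'C), fun hcon => hcon.2 (hCint _ hc'C).2⟩⟩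
      obtain ⟨a, haφ, b, hbφ, hadj⟩ := c.mm.edge v hv c' hc'U hUadj
      rcases glue_adj_iff.1 hadj with ⟨w, hwa, w', hw', -, ha2, hb2⟩ |
        ⟨w, hw, w', hw', badj, ha2, hb2⟩
      · exfalso
        have := c.g_even hv hbv hgφ hgb haφ (by omega)
        omega
      · have hc'bnd : (unionOf P).bnd c' = none :=
          U_bnd_of_Gq_none c.hP (hCint _ hc'C).2
        have hbO : b % 2 = 1 := by
          have hbn := c.mm.bnd_none c' hc'U hc'bnd b hbφ
          rw [hb2] at hbn ⊢
          exact c.rmap_odd_of_bnd_none hw' hbn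
        have hkeep := c.keep_comp hC hp ⟨c', hc'C, b, hbφ, hbO⟩
        exact unionOf_verts.2 ⟨_, ⟨hp, hkeep⟩, hvp⟩

lemma label_beta (c : Ctx t Ga Gb1 Gq P φ) {v : ℕ} (hv : v ∈ (unionOf P).verts) {l : X}
    (hl : l ∈ (unionOf P).label v) {a w : ℕ} (ha : a ∈ φ v) (hw : w ∈ Gb1.verts)
    (haw : a = rmap Ga Gb1 w) (hlw : l ∈ Gb1.label w) :
    v ∈ (unionOf (Pbeta Ga Gb1 Gq φ P)).verts ∧
      l ∈ (unionOf (Pbeta Ga Gb1 Gq φ P)).label v := by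
  obtain ⟨p, hp, hlp⟩ := unionOf_label.1 hl
  rcases pcs_cases (c.hP hp) with ⟨v', hv', i', hvi', rfl⟩ | ⟨v', hv', i', hvi', l', hl', rfl⟩ |
    ⟨u₁, v₁, i, j, hadjq, hqu, hqv, rfl⟩ | ⟨C, hC, rfl⟩
  · exact absurd (singlePc_label.1 hlp).2 (Set.notMem_empty l)
  · obtain ⟨rfl, hlm⟩ := singlePc_label.1 hlp
    rw [Set.mem_singleton_iff] at hlm
    subst hlm
    have hne : (singlePc v i' ({l} : Set X)).bnd v ≠ none := by
      rw [singlePc_bnd, if_pos rfl]; simp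
    have hUb : (unionOf P).bnd v = some i' := by
      rw [unionOf_bnd_eq c.hP hp hne, ← pcs_bnd_eq (c.hP hp) hne, singlePc_bnd, if_pos rfl]
    have hidx := c.idx_match hv hUb ha hw haw
    have hkeep := keep_label (Gq := Gq) v i' l hvi' ⟨a, ha, w, hw, haw, hlw⟩ hidx
    exact ⟨unionOf_verts.2 ⟨_, ⟨hp, hkeep⟩, singlePc_verts.2 rfl⟩,
      unionOf_label.2 ⟨_, ⟨hp, hkeep⟩, hlp⟩⟩
  · exact absurd hlp edgePc_label
  · obtain ⟨hvC, hlq⟩ := compPc_label.1 hlp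
    have hCint : ∀ x ∈ C, x ∈ interior Gq := by
      obtain ⟨v₀, hv₀, hCeq⟩ := hC
      intro x hx; rw [hCeq] at hx; exact hx.1
    have hbv : (unionOf P).bnd v = none := U_bnd_of_Gq_none c.hP (hCint _ hvC).2
    have haO : a % 2 = 1 := by
      have hbn := c.mm.bnd_none v hv hbv a ha
      rw [haw] at hbn ⊢
      exact c.rmap_odd_of_bnd_none hw hbn
    have hkeep := c.keep_comp hC hp ⟨v, hvC, a, ha, haO⟩
    exact ⟨unionOf_verts.2 ⟨_, ⟨hp, hkeep⟩, compPc_verts.2 (Or.inl hvC)⟩,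
      unionOf_label.2 ⟨_, ⟨hp, hkeep⟩, hlp⟩⟩

lemma edge_beta (c : Ctx t Ga Gb1 Gq P φ) {u v : ℕ} (hu : u ∈ (unionOf P).verts)
    (hv : v ∈ (unionOf P).verts) (hadj : (unionOf P).Adj u v) {a b w w' : ℕ}
    (ha : a ∈ φ u) (hb : b ∈ φ v) (hw : w ∈ Gb1.verts) (hw' : w' ∈ Gb1.verts)
    (badj : Gb1.Adj w w') (haw : a = rmap Ga Gb1 w) (hbw : b = rmap Ga Gb1 w') :
    u ∈ (unionOf (Pbeta Ga Gb1 Gq φ P)).verts ∧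
      v ∈ (unionOf (Pbeta Ga Gb1 Gq φ P)).verts ∧
      (unionOf (Pbeta Ga Gb1 Gq φ P)).Adj u v := by
  obtain ⟨p, hp, hpadj⟩ := unionOf_adj.1 hadj
  rcases pcs_cases (c.hP hp) with ⟨v', hv', i', hvi', rfl⟩ | ⟨v', hv', i', hvi', l', hl', rfl⟩ |
    ⟨u₁, v₁, i, j, hadjq, hqu, hqv, rfl⟩ | ⟨C, hC, rfl⟩
  · exact absurd hpadj singlePc_adj
  · exact absurd hpadj singlePc_adj
  · have hne1 : (edgePc u₁ v₁ i j : BLG X).bnd u₁ ≠ none := by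
      rw [edgePc_bnd, if_pos rfl]; simp
    have hne2 : (edgePc u₁ v₁ i j : BLG X).bnd v₁ ≠ none := by
      rw [edgePc_bnd]
      by_cases h : v₁ = u₁ <;> simp [h]
    have hUbu : (unionOf P).bnd u₁ = some i := by
      rw [unionOf_bnd_eq c.hP hp hne1, hqu]
    have hUbv : (unionOf P).bnd v₁ = some j := by
      rw [unionOf_bnd_eq c.hP hp hne2, hqv]
    rcases edgePc_adj.1 hpadj with ⟨h1, h2⟩ | ⟨h1, h2⟩
    · subst h1; subst h2
      have hiu := c.idx_match hu hUbu ha hw haw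
      have hjv := c.idx_match hv hUbv hb hw' hbw
      have hkeep := keep_edge (Gq := Gq) c.hb1 u v i j hqu hqv
        ⟨a, ha, b, hb, w, hw, w', hw', badj, haw, hbw⟩ hiu hjv
      exact ⟨unionOf_verts.2 ⟨_, ⟨hp, hkeep⟩, edgePc_verts.2 (Or.inl rfl)⟩,
        unionOf_verts.2 ⟨_, ⟨hp, hkeep⟩, edgePc_verts.2 (Or.inr rfl)⟩,
        unionOf_adj.2 ⟨_, ⟨hp, hkeep⟩, hpadj⟩⟩
    · subst h1; subst h2
      have hiu := c.idx_match hv hUbu hb hw' hbw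
      have hjv := c.idx_match hu hUbv ha hw haw
      have hkeep := keep_edge (Gq := Gq) c.hb1 v u i j hqu hqv
        ⟨b, hb, a, ha, w', hw', w, hw, c.hb1.2.1 _ _ badj, hbw, haw⟩ hiu hjv
      exact ⟨unionOf_verts.2 ⟨_, ⟨hp, hkeep⟩, edgePc_verts.2 (Or.inr rfl)⟩,
        unionOf_verts.2 ⟨_, ⟨hp, hkeep⟩, edgePc_verts.2 (Or.inl rfl)⟩,
        unionOf_adj.2 ⟨_, ⟨hp, hkeep⟩, hpadj⟩⟩
  · obtain ⟨hq, hum, hvm, hnb⟩ := compPc_adj.1 hpadj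
    have hCint : ∀ x ∈ C, x ∈ interior Gq := by
      obtain ⟨v₀, hv₀, hCeq⟩ := hC
      intro x hx; rw [hCeq] at hx; exact hx.1
    have hone : u ∈ C ∨ v ∈ C := by
      by_cases h : Gq.bnd u = none
      · left
        rcases compPc_verts.1 hum with h' | h'
        · exact h'
        · exact absurd h h'.2.1
      · right
        have h' : Gq.bnd v = none := by
          by_contra h''
          exact hnb ⟨h, h''⟩
        rcases compPc_verts.1 hvm with h'' | h''
        · exact h''
        · exact absurd h' h''.2.1
    have hkeep : Keep Ga Gb1 Gq φ (compPc Gq C) := by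
      rcases hone with hC1 | hC1
      · have hbu : (unionOf P).bnd u = none := U_bnd_of_Gq_none c.hP (hCint _ hC1).2
        have haO : a % 2 = 1 := by
          have hbn := c.mm.bnd_none u hu hbu a ha
          rw [haw] at hbn ⊢
          exact c.rmap_odd_of_bnd_none hw hbn
        exact c.keep_comp hC hp ⟨u, hC1, a, ha, haO⟩
      · have hbv : (unionOf P).bnd v = none := U_bnd_of_Gq_none c.hP (hCint _ hC1).2
        have hbO : b % 2 = 1 := by
          have hbn := c.mm.bnd_none v hv hbv b hb
          rw [hbw] at hbn ⊢
          exact c.rmap_odd_of_bnd_none hw' hbn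
        exact c.keep_comp hC hp ⟨v, hC1, b, hb, hbO⟩
    exact ⟨unionOf_verts.2 ⟨_, ⟨hp, hkeep⟩, hum⟩,
      unionOf_verts.2 ⟨_, ⟨hp, hkeep⟩, hvm⟩,
      unionOf_adj.2 ⟨_, ⟨hp, hkeep⟩, hpadj⟩⟩

end Ctx

lemma even_move {G1 G2 G2' : BLG X} {a : ℕ} (hav : a ∈ (glue G1 G2).verts) (hE : a % 2 = 0) :
    a ∈ (glue G1 G2').verts ∧ (glue G1 G2').bnd a = (glue G1 G2).bnd a := by
  obtain ⟨h1, h2⟩ := glue_even hav hE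
  have hm : a ∈ (glue G1 G2').verts := by
    rw [h2]; exact mem_glue_left h1
  exact ⟨hm, by rw [glue_bnd_even hm hE, glue_bnd_even hav hE]⟩

/-- The recombined branch sets. -/
def chi (Ga Gb1 Gb2 Gq : BLG X) (φ ψ : ℕ → Set ℕ) (P : Set (BLG X)) (v : ℕ) : Set ℕ :=
  {a | a ∈ φ v ∧ a % 2 = 0} ∪
    (if v ∈ (unionOf (Pbeta Ga Gb1 Gq φ P)).verts then rmap Ga Gb2 '' ψ v else ∅)

lemma chi_mem {Ga Gb1 Gb2 Gq : BLG X} {φ ψ : ℕ → Set ℕ} {P : Set (BLG X)} {v x : ℕ} :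
    x ∈ chi Ga Gb1 Gb2 Gq φ ψ P v ↔
      (x ∈ φ v ∧ x % 2 = 0) ∨
      (v ∈ (unionOf (Pbeta Ga Gb1 Gq φ P)).verts ∧ ∃ w ∈ ψ v, rmap Ga Gb2 w = x) := by
  unfold chi
  by_cases h : v ∈ (unionOf (Pbeta Ga Gb1 Gq φ P)).verts <;>
    simp [h, Set.mem_union, Set.mem_image]

lemma recombine {t : ℕ} {Ga Gb1 Gq : BLG X} {P : Set (BLG X)} {φ : ℕ → Set ℕ}
    (c : Ctx t Ga Gb1 Gq P φ) {Gb2 : BLG X} (hb2 : Gb2.WF t) {ψ : ℕ → Set ℕ}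
    (hψ : MinorModel (unionOf (Pbeta Ga Gb1 Gq φ P)) Gb2 ψ) :
    MinorModel (unionOf P) (glue Ga Gb2) (chi Ga Gb1 Gb2 Gq φ ψ P) := by
  constructor
  · -- sub
    intro v hv x hx
    rcases chi_mem.1 hx with ⟨hxφ, hxE⟩ | ⟨hvβ, w, hw, hwx⟩
    · exact (even_move (c.mm.sub v hv hxφ) hxE).1
    · rw [← hwx]; exact mem_glue_right (hψ.sub v hvβ hw)
  · -- nonempty
    intro v hv
    cases hbv : (unionOf P).bnd v with
    | none =>
        rcases c.interior_dichotomy hv hbv with hodd | heven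
        · obtain ⟨a₀, ha₀⟩ := c.mm.nonempty v hv
          have hvβ := c.interior_odd_in_beta hv hbv ⟨a₀, ha₀, hodd a₀ ha₀⟩
          obtain ⟨w, hw⟩ := hψ.nonempty v hvβ
          exact ⟨_, chi_mem.2 (Or.inr ⟨hvβ, w, hw, rfl⟩)⟩
        · obtain ⟨a₀, ha₀⟩ := c.mm.nonempty v hv
          exact ⟨a₀, chi_mem.2 (Or.inl ⟨ha₀, heven a₀ ha₀⟩)⟩
    | some i =>
        obtain ⟨g, hgφ, hgb⟩ := (c.mm.bnd_some v hv i hbv).2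
        rcases Nat.mod_two_eq_zero_or_one g with hgE | hgO
        · exact ⟨g, chi_mem.2 (Or.inl ⟨hgφ, hgE⟩)⟩
        · have hvβ := c.odd_g_in_beta hv hbv hgφ hgb hgO
          obtain ⟨w, hw⟩ := hψ.nonempty v hvβ
          exact ⟨_, chi_mem.2 (Or.inr ⟨hvβ, w, hw, rfl⟩)⟩
  · -- conn
    intro v hv x hx y hy
    have hEreach : ∀ x' ∈ φ v, ∀ y' ∈ φ v, x' % 2 = 0 → y' % 2 = 0 →
        ReachIn (glue Ga Gb2) (chi Ga Gb1 Gb2 Gq φ ψ P v) x' y' := by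
      intro x' hx' y' hy' hx'E hy'E
      refine reach_subset (fun z hz => chi_mem.2 (Or.inl hz)) ?_
      exact reach_evens c.ha c.hb1 (c.hu hv) (c.mm.conn v hv x' hx' y' hy') hx' hx'E hy'E
    have hRreach : ∀ hvβ : v ∈ (unionOf (Pbeta Ga Gb1 Gq φ P)).verts,
        ∀ w ∈ ψ v, ∀ w' ∈ ψ v,
        ReachIn (glue Ga Gb2) (chi Ga Gb1 Gb2 Gq φ ψ P v) (rmap Ga Gb2 w) (rmap Ga Gb2 w') := by
      intro hvβ w hw w' hw'
      refine reach_subset (S := rmap Ga Gb2 '' ψ v) ?_ ?_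
      · intro z hz
        obtain ⟨p, hp, hpz⟩ := hz
        exact chi_mem.2 (Or.inr ⟨hvβ, p, hp, hpz⟩)
      · refine reach_map (rmap Ga Gb2) ?_ (hψ.conn v hvβ w hw w' hw')
        intro p q hadj hp hq
        exact ⟨glue_adj_G2 (hψ.sub v hvβ hp) (hψ.sub v hvβ hq) hadj, ⟨p, hp, rfl⟩, ⟨q, hq, rfl⟩⟩
    cases hbv : (unionOf P).bnd v with
    | none =>
        rcases c.interior_dichotomy hv hbv with hodd | heven
        · -- all branch elements odd: both x and y are images
          have hx' : ∃ w ∈ ψ v, rmap Ga Gb2 w = x ∧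
              v ∈ (unionOf (Pbeta Ga Gb1 Gq φ P)).verts := by
            rcases chi_mem.1 hx with ⟨hxφ, hxE⟩ | ⟨hvβ, w, hw, hwx⟩
            · have := hodd x hxφ; omega
            · exact ⟨w, hw, hwx, hvβ⟩
          have hy' : ∃ w ∈ ψ v, rmap Ga Gb2 w = y := by
            rcases chi_mem.1 hy with ⟨hyφ, hyE⟩ | ⟨hvβ, w, hw, hwy⟩
            · have := hodd y hyφ; omega
            · exact ⟨w, hw, hwy⟩
          obtain ⟨w, hw, hwx, hvβ⟩ := hx'
          obtain ⟨w', hw', hwy⟩ := hy'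
          rw [← hwx, ← hwy]
          exact hRreach hvβ w hw w' hw'
        · -- all even
          have hnotβ : ∀ z, z ∈ chi Ga Gb1 Gb2 Gq φ ψ P v → z ∈ φ v ∧ z % 2 = 0 := by
            intro z hz
            rcases chi_mem.1 hz with h | ⟨hvβ, -⟩
            · exact h
            · exfalso
              obtain ⟨a₀, ha₀⟩ := c.mm.nonempty v hv
              have h1 := c.beta_interior_odd hvβ hbv a₀ ha₀
              have h2 := heven a₀ ha₀
              omega
          obtain ⟨hxφ, hxE⟩ := hnotβ x hx
          obtain ⟨hyφ, hyE⟩ := hnotβ y hy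
          exact hEreach x hxφ y hyφ hxE hyE
    | some i =>
        by_cases hvβ : v ∈ (unionOf (Pbeta Ga Gb1 Gq φ P)).verts
        · obtain ⟨w₀, hw₀, hw₀b⟩ := (hψ.bnd_some v hvβ i (c.Ub_bnd_some_of hvβ hbv)).2
          have hge : ∀ z ∈ chi Ga Gb1 Gb2 Gq φ ψ P v,
              ReachIn (glue Ga Gb2) (chi Ga Gb1 Gb2 Gq φ ψ P v) z (rmap Ga Gb2 w₀) := by
            intro z hz
            rcases chi_mem.1 hz with ⟨hzφ, hzE⟩ | ⟨-, w, hw, hwz⟩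
            · obtain ⟨g, hgφ, hgb⟩ := (c.mm.bnd_some v hv i hbv).2
              have hgE := c.g_even hv hbv hgφ hgb hzφ hzE
              have hge2 : rmap Ga Gb2 w₀ = g := by
                have hgv := c.mm.sub v hv hgφ
                obtain ⟨hg2, hgeq⟩ := glue_even hgv hgE
                have hGa : Ga.bnd (g / 2) = some i := by
                  rw [← glue_bnd_even hgv hgE, hgb]
                have hmw : Matched Ga Gb2 w₀ := ⟨g / 2, hg2, i, hw₀b, hGa⟩
                obtain ⟨u₁, hu₁, ⟨i₁, hbi₁, hai₁⟩, heq⟩ := rmap_of_matched hmw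
                have hii : i₁ = i := by rw [hw₀b] at hbi₁; injection hbi₁ with h; omega
                subst hii
                have := c.ha.2.2.2.2.2.1 u₁ (g / 2) i₁ hai₁ hGa
                omega
              rw [hge2]
              exact hEreach z hzφ g hgφ hzE hgE
            · rw [← hwz]
              exact hRreach hvβ w hw w₀ hw₀
          exact (hge x hx).trans
            (reach_symm (fun a b h => glue_adj_symm c.ha hb2 h) (hge y hy))
        · have hE : ∀ z, z ∈ chi Ga Gb1 Gb2 Gq φ ψ P v → z ∈ φ v ∧ z % 2 = 0 := by
            intro z hz
            rcases chi_mem.1 hz with h | ⟨hvβ', -⟩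
            · exact h
            · exact absurd hvβ' hvβ
          obtain ⟨hxφ, hxE⟩ := hE x hx
          obtain ⟨hyφ, hyE⟩ := hE y hy
          exact hEreach x hxφ y hyφ hxE hyE
  · -- disj
    intro u hu v hv hne
    have key : ∀ u' v', u' ∈ (unionOf P).verts → v' ∈ (unionOf P).verts →
        ∀ z, (z ∈ φ u' ∧ z % 2 = 0) →
        (v' ∈ (unionOf (Pbeta Ga Gb1 Gq φ P)).verts ∧ ∃ w ∈ ψ v', rmap Ga Gb2 w = z) →
        u' = v' := by
      intro u' v' hu' hv' z ⟨hzφ, hzE⟩ ⟨hv'β, w, hw, hwz⟩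
      have hmw : Matched Ga Gb2 w := rmap_even_iff.1 (by rw [hwz]; exact hzE)
      obtain ⟨u₁, hu₁, ⟨j, hbj, haj⟩, heq⟩ := rmap_of_matched hmw
      -- v' has boundary index j
      have hUv' : (unionOf P).bnd v' = some j := by
        cases hUβb : (unionOf (Pbeta Ga Gb1 Gq φ P)).bnd v' with
        | none => exact absurd (hψ.bnd_none v' hv'β hUβb w hw) (by rw [hbj]; simp)
        | some j' =>
            rcases (hψ.bnd_some v' hv'β j' hUβb).1 w hw with h | h
            · exact absurd h (by rw [hbj]; simp)
            · have : j' = j := by rw [hbj] at h; injection h with h'; omega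
              subst this
              exact c.Ub_bnd_some hUβb
      -- u' has boundary index j as well
      have hzg : (glue Ga Gb1).bnd z = some j := by
        have hzv := c.mm.sub u' hu' hzφ
        rw [glue_bnd_even hzv hzE]
        have : z / 2 = u₁ := by rw [← hwz, heq]; omega
        rw [this, haj]
      have hUu' : (unionOf P).bnd u' = some j := by
        cases hbu : (unionOf P).bnd u' with
        | none => exact absurd (c.mm.bnd_none u' hu' hbu z hzφ) (by rw [hzg]; simp)
        | some j'' =>
            rcases (c.mm.bnd_some u' hu' j'' hbu).1 z hzφ with h | h
            · exact absurd h (by rw [hzg]; simp)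
            · rw [hzg] at h; injection h with h'; rw [h']
      exact c.U_bnd_inj hu' hv' hUu' hUv'
    rw [Set.disjoint_left]
    intro z hzu hzv
    rcases chi_mem.1 hzu with h1 | ⟨huβ, w, hw, hwz⟩
    · rcases chi_mem.1 hzv with h2 | h2
      · exact Set.disjoint_left.1 (c.mm.disj u hu v hv hne) h1.1 h2.1
      · exact hne (key u v hu hv z h1 h2)
    · rcases chi_mem.1 hzv with h2 | ⟨hvβ, w', hw', hw'z⟩
      · exact hne (key v u hv hu z h2 ⟨huβ, w, hw, hwz⟩).symm
      · have : w = w' := by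
          refine rmap_inj c.ha hb2 (hψ.sub u huβ hw) (hψ.sub v hvβ hw') ?_
          rw [hwz, hw'z]
        subst this
        exact Set.disjoint_left.1 (hψ.disj u huβ v hvβ hne) hw hw'
  · -- edge
    intro u hu v hv hadj
    obtain ⟨a, ha, b, hb, hadj1⟩ := c.mm.edge u hu v hv hadj
    rcases glue_adj_iff.1 hadj1 with ⟨w, hwGa, w', hw'Ga, gadj, ha2, hb2eq⟩ |
      ⟨w, hw, w', hw', badj, ha2, hb2eq⟩
    · refine ⟨a, chi_mem.2 (Or.inl ⟨ha, by omega⟩), b, chi_mem.2 (Or.inl ⟨hb, by omega⟩), ?_⟩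
      rw [ha2, hb2eq]
      exact glue_adj_G1 hwGa hw'Ga gadj
    · obtain ⟨huβ, hvβ, hβadj⟩ := c.edge_beta hu hv hadj ha hb hw hw' badj ha2 hb2eq
      obtain ⟨x, hxψ, y, hyψ, hGb2adj⟩ := hψ.edge u huβ v hvβ hβadj
      exact ⟨rmap Ga Gb2 x, chi_mem.2 (Or.inr ⟨huβ, x, hxψ, rfl⟩),
        rmap Ga Gb2 y, chi_mem.2 (Or.inr ⟨hvβ, y, hyψ, rfl⟩),
        glue_adj_G2 (hψ.sub u huβ hxψ) (hψ.sub v hvβ hyψ) hGb2adj⟩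
  · -- bnd_none
    intro v hv hbv z hz
    rcases chi_mem.1 hz with ⟨hzφ, hzE⟩ | ⟨hvβ, w, hw, hwz⟩
    · rw [(even_move (c.mm.sub v hv hzφ) hzE).2]
      exact c.mm.bnd_none v hv hbv z hzφ
    · have hUβb : (unionOf (Pbeta Ga Gb1 Gq φ P)).bnd v = none := by
        cases h : (unionOf (Pbeta Ga Gb1 Gq φ P)).bnd v with
        | none => rfl
        | some i =>
            have := c.Ub_bnd_some h
            rw [this] at hbv
            exact absurd hbv (Option.some_ne_none _)
      rw [← hwz, glue_bnd_rmap (hψ.sub v hvβ hw)]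
      exact hψ.bnd_none v hvβ hUβb w hw
  · -- bnd_some
    intro v hv i hbv
    constructor
    · intro z hz
      rcases chi_mem.1 hz with ⟨hzφ, hzE⟩ | ⟨hvβ, w, hw, hwz⟩
      · rw [(even_move (c.mm.sub v hv hzφ) hzE).2]
        exact (c.mm.bnd_some v hv i hbv).1 z hzφ
      · rw [← hwz, glue_bnd_rmap (hψ.sub v hvβ hw)]
        exact (hψ.bnd_some v hvβ i (c.Ub_bnd_some_of hvβ hbv)).1 w hw
    · by_cases hvβ : v ∈ (unionOf (Pbeta Ga Gb1 Gq φ P)).verts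
      · obtain ⟨w₀, hw₀, hw₀b⟩ := (hψ.bnd_some v hvβ i (c.Ub_bnd_some_of hvβ hbv)).2
        refine ⟨rmap Ga Gb2 w₀, chi_mem.2 (Or.inr ⟨hvβ, w₀, hw₀, rfl⟩), ?_⟩
        rw [glue_bnd_rmap (hψ.sub v hvβ hw₀), hw₀b]
      · obtain ⟨g, hgφ, hgb⟩ := (c.mm.bnd_some v hv i hbv).2
        have hgE : g % 2 = 0 := by
          rcases Nat.mod_two_eq_zero_or_one g with h | h
          · exact h
          · exact absurd (c.odd_g_in_beta hv hbv hgφ hgb h) hvβ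
        refine ⟨g, chi_mem.2 (Or.inl ⟨hgφ, hgE⟩), ?_⟩
        rw [(even_move (c.mm.sub v hv hgφ) hgE).2, hgb]
  · -- labels
    intro v hv l hl
    obtain ⟨a, haφ, hla⟩ := c.mm.labels v hv l hl
    rcases glue_label_iff.1 hla with ⟨w, hwGa, haw, hlw⟩ | ⟨w, hw, haw, hlw⟩
    · refine ⟨a, chi_mem.2 (Or.inl ⟨haφ, by omega⟩), ?_⟩
      exact glue_label_iff.2 (Or.inl ⟨w, hwGa, haw, hlw⟩)
    · obtain ⟨hvβ, hlβ⟩ := c.label_beta hv hl haφ hw haw hlw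
      obtain ⟨w', hw'ψ, hlw'⟩ := hψ.labels v hvβ l hlβ
      exact ⟨rmap Ga Gb2 w', chi_mem.2 (Or.inr ⟨hvβ, w', hw'ψ, rfl⟩),
        glue_label_iff.2 (Or.inr ⟨w', hψ.sub v hvβ hw'ψ, rfl, hlw'⟩)⟩

lemma unionOf_empty_verts {v : ℕ} : v ∉ (unionOf (∅ : Set (BLG X))).verts := by
  simp [unionOf]

lemma minor_empty (G : BLG X) :
    MinorModel (unionOf (∅ : Set (BLG X))) G (fun _ => ∅) := by
  constructor <;> intro v hv <;> exact absurd hv unionOf_empty_verts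

lemma key_subset (t : ℕ) (Q : Set (BLG X)) (Ga Gb1 Gb2 : BLG X)
    (ha : Ga.WF t) (hb1 : Gb1.WF t) (hb2 : Gb2.WF t)
    (hsub : folioStar Q t Gb1 ⊆ folioStar Q t Gb2) :
    folioStar Q t (glue Ga Gb1) ⊆ folioStar Q t (glue Ga Gb2) := by
  intro H hH
  obtain ⟨hmp, hmin⟩ := hH
  obtain ⟨Gq, hGq, hm⟩ := mem_mpcsPlus_iff.1 hmp
  obtain ⟨P, hPpcs, hPne, hIso⟩ := hm
  have hminU : Minor (unionOf P) (glue Ga Gb1) := minor_iso_left hIso hmin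
  obtain ⟨φ, hφ⟩ := hminU
  have c : Ctx t Ga Gb1 Gq P φ := ⟨ha, hb1, hPpcs, hφ⟩
  have hbm := c.beta_model
  have hψex : ∃ ψ, MinorModel (unionOf (Pbeta Ga Gb1 Gq φ P)) Gb2 ψ := by
    rcases Set.eq_empty_or_nonempty (Pbeta Ga Gb1 Gq φ P) with he | hne
    · exact ⟨fun _ => ∅, he ▸ minor_empty Gb2⟩
    · have hUβfolio : unionOf (Pbeta Ga Gb1 Gq φ P) ∈ folioStar Q t Gb1 := by
        refine ⟨?_, ⟨_, hbm⟩⟩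
        exact mem_mpcsPlus_iff.2 ⟨Gq, hGq, Pbeta Ga Gb1 Gq φ P, c.Pbeta_pcs, hne, iso_refl _⟩
      exact (hsub hUβfolio).2
  obtain ⟨ψ, hψ⟩ := hψex
  exact ⟨hmp, minor_iso_right hIso ⟨_, recombine c hb2 hψ⟩⟩

end Main
/-- For a set `Q` of connected `X`-labeled graphs and `t`-boundaried
`X`-labeled graphs `Gα, Gβ1, Gβ2` with `folio*_{Q,t}(Gβ1) ⊆ folio*_{Q,t}(Gβ2)`, we get
`folio*_{Q,t}(Gα ⊕ Gβ1) ⊆ folio*_{Q,t}(Gα ⊕ Gβ2)`; moreover equality of the folios of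
`Gβ1` and `Gβ2` yields equality after gluing. -/
theorem stmt19 {X : Type} (t : ℕ) (Q : Set (BLG X))
    (hQ : ∀ q ∈ Q, q.WF 0 ∧ q.Conn)
    (Ga Gb1 Gb2 : BLG X) (ha : Ga.WF t) (hb1 : Gb1.WF t) (hb2 : Gb2.WF t) :
    (folioStar Q t Gb1 ⊆ folioStar Q t Gb2 →
      folioStar Q t (glue Ga Gb1) ⊆ folioStar Q t (glue Ga Gb2)) ∧
    (folioStar Q t Gb1 = folioStar Q t Gb2 →
      folioStar Q t (glue Ga Gb1) = folioStar Q t (glue Ga Gb2)) := by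
  constructor
  · exact key_subset t Q Ga Gb1 Gb2 ha hb1 hb2
  · intro he
    apply Set.Subset.antisymm
    · exact key_subset t Q Ga Gb1 Gb2 ha hb1 hb2 (le_of_eq he)
    · exact key_subset t Q Ga Gb2 Gb1 ha hb2 hb1 (le_of_eq he.symm)

end

end FDel
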